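/- arXiv:2209.10217 — 3 statements merged into one kernel-verified Lean document; each statement's English description precedes it below -/
import Mathlib

section
/- In ℝ², let ρ_1 = ½(δ_{(0,1)} + δ_{(0,−1)}), and for ε ∈ ℝ let x_ε = (1, ε/2) and ρ_2^ε = ½(δ_{x_ε} + δ_{−x_ε}); define P_ε = ½(δ_{ρ_1} + δ_{ρ_2^ε}) as a probability measure on the space of probability measures on a closed ball Ω ⊂ ℝ² containing all these points. Then for all 0 < ε ≤ ½: any Wasserstein barycenters μ_{P_ε} of P_ε and μ_{P_{−ε}} of P_{−ε} satisfy W₂(μ_{P_ε}, μ_{P_{−ε}}) = 1, while 𝒲₁(P_ε, P_{−ε}) ≤ ε. -/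
noncomputable section

open MeasureTheory Metric Set
open scoped ENNReal NNReal RealInnerProductSpace

/-- The set of transport plans (couplings) between two measures. -/
def Couplings {α β : Type*} [MeasurableSpace α] [MeasurableSpace β]
    (ρ : Measure α) (μ : Measure β) : Set (Measure (α × β)) :=
  {γ | γ.map Prod.fst = ρ ∧ γ.map Prod.snd = μ}

/-- The 2-Wasserstein distance between two measures on a normed space. -/
def W2 {α : Type*} [MeasurableSpace α] [NormedAddCommGroup α] (ρ μ : Measure α) : ℝ :=
  Real.sqrt (sInf ((fun γ : Measure (α × α) => ∫ p, ‖p.1 - p.2‖ ^ 2 ∂γ) '' Couplings ρ μ))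

/-- The 1-Wasserstein distance between measures on the space of measures,
with ground cost `W2`. -/
def Wc1 {α : Type*} [MeasurableSpace α] [NormedAddCommGroup α]
    (P Q : Measure (Measure α)) : ℝ :=
  sInf ((fun γ : Measure (Measure α × Measure α) => ∫ p, W2 p.1 p.2 ∂γ) '' Couplings P Q)

/-- The variance functional `F_P`. -/
def Fvar {α : Type*} [MeasurableSpace α] [NormedAddCommGroup α]
    (P : Measure (Measure α)) (μ : Measure α) : ℝ :=
  (1 / 2) * ∫ ρ, W2 ρ μ ^ 2 ∂P

abbrev Euc (d : ℕ) : Type := EuclideanSpace ℝ (Fin d)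

/-- `ρ` is a Borel probability measure concentrated on `Ω`. -/
def ProbOn {d : ℕ} (Ω : Set (Euc d)) (ρ : Measure (Euc d)) : Prop :=
  IsProbabilityMeasure ρ ∧ ρ Ωᶜ = 0

/-- `P` is a Borel probability measure on the probability measures over `Ω`. -/
def PProbOn {d : ℕ} (Ω : Set (Euc d)) (P : Measure (Measure (Euc d))) : Prop :=
  IsProbabilityMeasure P ∧ P {ρ | ¬ ProbOn Ω ρ} = 0

/-- `μ` is a Wasserstein barycenter of `P` (a minimizer of `Fvar P` over `P(Ω)`). -/
def IsBary {d : ℕ} (Ω : Set (Euc d)) (P : Measure (Measure (Euc d)))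
    (μ : Measure (Euc d)) : Prop :=
  ProbOn Ω μ ∧ ∀ ν, ProbOn Ω ν → Fvar P μ ≤ Fvar P ν

/-- The point `(a, b) ∈ ℝ²`. -/
def pt (a b : ℝ) : Euc 2 := (EuclideanSpace.equiv (Fin 2) ℝ).symm ![a, b]

/-- `ρ₁ = ½(δ_{(0,1)} + δ_{(0,-1)})`. -/
def rho1 : Measure (Euc 2) :=
  (2 : ℝ≥0∞)⁻¹ • (Measure.dirac (pt 0 1) + Measure.dirac (pt 0 (-1)))

/-- `ρ₂^ε = ½(δ_{x_ε} + δ_{-x_ε})` with `x_ε = (1, ε/2)`. -/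
def rho2 (ε : ℝ) : Measure (Euc 2) :=
  (2 : ℝ≥0∞)⁻¹ • (Measure.dirac (pt 1 (ε / 2)) + Measure.dirac (pt (-1) (-(ε / 2))))

/-- `P_ε = ½(δ_{ρ₁} + δ_{ρ₂^ε})`. -/
def Pm (ε : ℝ) : Measure (Measure (Euc 2)) :=
  (2 : ℝ≥0∞)⁻¹ • (Measure.dirac rho1 + Measure.dirac (rho2 ε))

/-! ### Auxiliary: points -/

lemma pt_apply (a b : ℝ) (i : Fin 2) : pt a b i = ![a, b] i := rfl

lemma pt_zero (a b : ℝ) : pt a b 0 = a := rfl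
lemma pt_one (a b : ℝ) : pt a b 1 = b := rfl

lemma norm_sq_euc (x : Euc 2) : ‖x‖ ^ 2 = x 0 ^ 2 + x 1 ^ 2 := by
  rw [EuclideanSpace.norm_eq, Real.sq_sqrt (by positivity)]
  simp [Fin.sum_univ_two]

lemma sub_apply_euc (x y : Euc 2) (i : Fin 2) : (x - y) i = x i - y i := rfl

lemma norm_sub_sq_euc (x y : Euc 2) : ‖x - y‖ ^ 2 = (x 0 - y 0) ^ 2 + (x 1 - y 1) ^ 2 := by
  rw [norm_sq_euc]; rfl

lemma euc_eq_iff (x : Euc 2) (a b : ℝ) : x = pt a b ↔ x 0 = a ∧ x 1 = b := by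
  constructor
  · rintro rfl; exact ⟨rfl, rfl⟩
  · rintro ⟨h0, h1⟩
    ext i
    fin_cases i
    · exact h0
    · exact h1

lemma pt_eq_pt_iff {a b c d : ℝ} : pt a b = pt c d ↔ a = c ∧ b = d := euc_eq_iff _ _ _

/-- measure `½(δ_x + δ_y)` -/
def hp {α : Type*} [MeasurableSpace α] (x y : α) : Measure α :=
  (2 : ℝ≥0∞)⁻¹ • (Measure.dirac x + Measure.dirac y)

lemma rho1_eq : rho1 = hp (pt 0 1) (pt 0 (-1)) := rfl
lemma rho2_eq (ε : ℝ) : rho2 ε = hp (pt 1 (ε / 2)) (pt (-1) (-(ε / 2))) := rfl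
lemma Pm_eq (ε : ℝ) : Pm ε = hp rho1 (rho2 ε) := rfl

lemma hp_comm {α : Type*} [MeasurableSpace α] (x y : α) : hp x y = hp y x := by
  simp [hp, add_comm]

instance hp_prob {α : Type*} [MeasurableSpace α] (x y : α) : IsProbabilityMeasure (hp x y) := by
  constructor
  simp only [hp, Measure.smul_apply, Measure.add_apply]
  rw [Measure.dirac_apply' _ .univ, Measure.dirac_apply' _ .univ]
  simp only [Set.indicator_of_mem (Set.mem_univ _), Pi.one_apply, smul_eq_mul,
    one_add_one_eq_two]
  exact ENNReal.inv_mul_cancel (by norm_num) (by norm_num)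

instance rho1_prob : IsProbabilityMeasure rho1 := hp_prob _ _
instance rho2_prob (ε : ℝ) : IsProbabilityMeasure (rho2 ε) := hp_prob _ _
instance Pm_prob (ε : ℝ) : IsProbabilityMeasure (Pm ε) := hp_prob _ _

/-! ### Singletons of measures are measurable -/

open MeasurableSpace in
lemma measurableSet_singleton_measure {α : Type*} [MeasurableSpace α]
    [MeasurableSpace.CountablyGenerated α] (ρ : Measure α) [IsProbabilityMeasure ρ] :
    MeasurableSet {ρ} := by
  set S : Set (Set α) := countableGeneratingSet α with hS
  set C : Set (Set α) := sInter '' {F : Set (Set α) | F.Finite ∧ F.Nonempty ∧ F ⊆ S} with hC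
  have hmeasS : ∀ s ∈ S, MeasurableSet s := fun s hs => by
    have := measurableSet_generateFrom (s := S) hs
    rwa [generateFrom_countableGeneratingSet (α := α)] at this
  have hmeasC : ∀ s ∈ C, MeasurableSet s := by
    rintro s ⟨F, ⟨hF, -, hFS⟩, rfl⟩
    exact MeasurableSet.sInter hF.countable (fun t ht => hmeasS t (hFS ht))
  have hCcount : C.Countable := by
    apply Set.Countable.image
    apply Set.Countable.mono _ (Set.countable_setOf_finite_subset
      (countable_countableGeneratingSet (α := α)))
    rintro F ⟨h1, -, h3⟩; exact ⟨h1, h3⟩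
  have hCpi : IsPiSystem C := by
    rintro s ⟨F, ⟨hF, hFne, hFS⟩, rfl⟩ t ⟨G, ⟨hG, hGne, hGS⟩, rfl⟩ -
    exact ⟨F ∪ G, ⟨hF.union hG, hFne.mono Set.subset_union_left,
      Set.union_subset hFS hGS⟩, Set.sInter_union F G⟩
  have hgen : ‹MeasurableSpace α› = generateFrom C := by
    refine le_antisymm ?_ (generateFrom_le hmeasC)
    conv_lhs => rw [← generateFrom_countableGeneratingSet (α := α)]
    refine generateFrom_le fun s hs => measurableSet_generateFrom ?_
    exact ⟨{s}, ⟨Set.finite_singleton _, Set.singleton_nonempty _, by simpa using hs⟩,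
      Set.sInter_singleton s⟩
  have hkey : {ρ} = {μ : Measure α | μ Set.univ = 1} ∩ ⋂ s ∈ C, {μ : Measure α | μ s = ρ s} := by
    apply Set.Subset.antisymm
    · rintro μ rfl
      exact ⟨measure_univ, Set.mem_iInter₂.2 fun s _ => rfl⟩
    · rintro μ ⟨h1, h2⟩
      have : IsFiniteMeasure μ := ⟨by rw [h1]; exact ENNReal.one_lt_top⟩
      have := MeasureTheory.ext_of_generate_finite C hgen hCpi
        (fun s hs => Set.mem_iInter₂.1 h2 s hs) (by rw [h1, measure_univ])
      simp [this]
  rw [hkey]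
  refine MeasurableSet.inter ?_ (MeasurableSet.biInter hCcount fun s hs => ?_)
  · exact Measure.measurable_coe .univ (measurableSet_singleton 1)
  · exact Measure.measurable_coe (hmeasC s hs) (measurableSet_singleton (ρ s))

/-! ### Integrals against diracs with measurable singleton -/

lemma ae_eq_const_dirac {α E : Type*} [MeasurableSpace α] {a : α} (h : MeasurableSet {a})
    (f : α → E) : f =ᵐ[Measure.dirac a] fun _ => f a := by
  rw [Filter.EventuallyEq, ae_iff]
  refine measure_mono_null (t := ({a} : Set α)ᶜ) (fun x hx hxa => ?_) ?_
  · simp only [Set.mem_singleton_iff] at hxa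
    subst hxa
    exact hx rfl
  · rw [Measure.dirac_apply' _ h.compl]
    simp

lemma integral_dirac_ms {α : Type*} [MeasurableSpace α] {a : α} (h : MeasurableSet {a})
    (f : α → ℝ) : ∫ x, f x ∂(Measure.dirac a) = f a := by
  rw [integral_congr_ae (ae_eq_const_dirac h f)]
  simp

lemma integrable_dirac_ms {α : Type*} [MeasurableSpace α] {a : α} (h : MeasurableSet {a})
    (f : α → ℝ) : Integrable f (Measure.dirac a) := by
  rw [integrable_congr (ae_eq_const_dirac h f)]
  exact integrable_const _

lemma integral_hp {α : Type*} [MeasurableSpace α] {p q : α} (hp' : MeasurableSet {p})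
    (hq' : MeasurableSet {q}) (f : α → ℝ) :
    ∫ x, f x ∂(hp p q) = (f p + f q) / 2 := by
  rw [hp, integral_smul_measure, integral_add_measure (integrable_dirac_ms hp' f)
    (integrable_dirac_ms hq' f), integral_dirac_ms hp' f, integral_dirac_ms hq' f]
  simp only [ENNReal.toReal_inv, ENNReal.toReal_ofNat, smul_eq_mul]
  ring

lemma integral_hp_ms {α : Type*} [MeasurableSpace α] [MeasurableSingletonClass α] (p q : α)
    (f : α → ℝ) : ∫ x, f x ∂(hp p q) = (f p + f q) / 2 :=
  integral_hp (measurableSet_singleton p) (measurableSet_singleton q) f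

lemma hp_apply_of_msets {α : Type*} [MeasurableSpace α] {p q : α} {s : Set α}
    (hs : MeasurableSet s) : hp p q s = 2⁻¹ * (s.indicator 1 p + s.indicator 1 q) := by
  simp only [hp, Measure.smul_apply, Measure.add_apply, Measure.dirac_apply' _ hs, smul_eq_mul]

lemma hp_compl_zero {α : Type*} [MeasurableSpace α] {p q : α} {s : Set α}
    (hs : MeasurableSet s) (hps : p ∈ s) (hqs : q ∈ s) : hp p q sᶜ = 0 := by
  rw [hp_apply_of_msets hs.compl]
  simp [Set.indicator_of_notMem, hps, hqs]

set_option linter.unusedSectionVars false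
/-! ### Couplings and W2 basics -/

section CouplingBasics

variable {α : Type*} [MeasurableSpace α] [NormedAddCommGroup α]

lemma coupling_prob {ρ μ : Measure α} [IsProbabilityMeasure ρ]
    {γ : Measure (α × α)} (hγ : γ ∈ Couplings ρ μ) : IsProbabilityMeasure γ := by
  constructor
  have : γ Set.univ = (γ.map Prod.fst) Set.univ := by
    rw [Measure.map_apply measurable_fst .univ]; rfl
  rw [this, hγ.1, measure_univ]

lemma coupling_fst {ρ μ : Measure α} {γ : Measure (α × α)} (hγ : γ ∈ Couplings ρ μ)
    {s : Set α} (hs : MeasurableSet s) : γ (Prod.fst ⁻¹' s) = ρ s := by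
  rw [← Measure.map_apply measurable_fst hs, hγ.1]

lemma coupling_snd {ρ μ : Measure α} {γ : Measure (α × α)} (hγ : γ ∈ Couplings ρ μ)
    {s : Set α} (hs : MeasurableSet s) : γ (Prod.snd ⁻¹' s) = μ s := by
  rw [← Measure.map_apply measurable_snd hs, hγ.2]

lemma prod_mem_couplings (ρ μ : Measure α) [IsProbabilityMeasure ρ] [IsProbabilityMeasure μ] :
    ρ.prod μ ∈ Couplings ρ μ :=
  ⟨by rw [Measure.map_fst_prod, measure_univ, one_smul],
   by rw [Measure.map_snd_prod, measure_univ, one_smul]⟩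

lemma couplings_nonempty (ρ μ : Measure α) [IsProbabilityMeasure ρ] [IsProbabilityMeasure μ] :
    (Couplings ρ μ).Nonempty := ⟨_, prod_mem_couplings ρ μ⟩

lemma cost_nonneg (ρ μ : Measure α) :
    ∀ x ∈ (fun γ : Measure (α × α) => ∫ p, ‖p.1 - p.2‖ ^ 2 ∂γ) '' Couplings ρ μ, 0 ≤ x := by
  rintro x ⟨γ, -, rfl⟩
  exact integral_nonneg fun p => by positivity

lemma W2_nonneg (ρ μ : Measure α) : 0 ≤ W2 ρ μ := Real.sqrt_nonneg _

lemma W2_sq (ρ μ : Measure α) :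
    W2 ρ μ ^ 2 = sInf ((fun γ : Measure (α × α) => ∫ p, ‖p.1 - p.2‖ ^ 2 ∂γ) '' Couplings ρ μ) :=
  Real.sq_sqrt (Real.sInf_nonneg (cost_nonneg ρ μ))

lemma W2_sq_le {ρ μ : Measure α} {γ : Measure (α × α)} (hγ : γ ∈ Couplings ρ μ) :
    W2 ρ μ ^ 2 ≤ ∫ p, ‖p.1 - p.2‖ ^ 2 ∂γ := by
  rw [W2_sq]
  exact csInf_le ⟨0, fun x hx => cost_nonneg ρ μ x hx⟩ ⟨γ, hγ, rfl⟩

lemma le_W2_sq {ρ μ : Measure α} [IsProbabilityMeasure ρ] [IsProbabilityMeasure μ] {c : ℝ}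
    (h : ∀ γ ∈ Couplings ρ μ, c ≤ ∫ p, ‖p.1 - p.2‖ ^ 2 ∂γ) : c ≤ W2 ρ μ ^ 2 := by
  rw [W2_sq]
  exact le_csInf ((couplings_nonempty ρ μ).image _) (by rintro x ⟨γ, hγ, rfl⟩; exact h γ hγ)

lemma W2_le_sqrt {ρ μ : Measure α} {c : ℝ} {γ : Measure (α × α)} (hγ : γ ∈ Couplings ρ μ)
    (hc : ∫ p, ‖p.1 - p.2‖ ^ 2 ∂γ ≤ c) : W2 ρ μ ≤ Real.sqrt c := by
  rw [W2]
  exact Real.sqrt_le_sqrt (le_trans (csInf_le ⟨0, fun x hx => cost_nonneg ρ μ x hx⟩ ⟨γ, hγ, rfl⟩) hc)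

end CouplingBasics

/-- `hp`-pair coupling between two `hp` measures. -/
lemma hp_pair_mem_couplings {α : Type*} [MeasurableSpace α]
    (x1 y1 x2 y2 : α) : hp (x1, y1) (x2, y2) ∈ Couplings (hp x1 x2) (hp y1 y2) := by
  constructor
  · rw [hp, Measure.map_smul, Measure.map_add _ _ measurable_fst,
      Measure.map_dirac' measurable_fst, Measure.map_dirac' measurable_fst]; rfl
  · rw [hp, Measure.map_smul, Measure.map_add _ _ measurable_snd,
      Measure.map_dirac' measurable_snd, Measure.map_dirac' measurable_snd]; rfl

lemma W2_sq_hp_le (x1 y1 x2 y2 : Euc 2) :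
    W2 (hp x1 x2) (hp y1 y2) ^ 2 ≤ (‖x1 - y1‖ ^ 2 + ‖x2 - y2‖ ^ 2) / 2 := by
  refine le_trans (W2_sq_le (hp_pair_mem_couplings x1 y1 x2 y2)) ?_
  rw [integral_hp_ms]

/-! ### Integrability helpers -/

lemma integrable_of_bound {α : Type*} [MeasurableSpace α] [TopologicalSpace α]
    [OpensMeasurableSpace α] [SecondCountableTopology α]
    {ν : Measure α} [IsFiniteMeasure ν] {K : Set α} {C : ℝ} (hν : ν Kᶜ = 0)
    {g : α → ℝ} (hg : Continuous g) (hC : ∀ y ∈ K, |g y| ≤ C) : Integrable g ν := by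
  refine ⟨hg.aestronglyMeasurable, HasFiniteIntegral.of_bounded (C := C) ?_⟩
  rw [ae_iff]
  refine measure_mono_null (fun x hx => ?_) hν
  intro hxK
  exact hx (by simpa [Real.norm_eq_abs] using hC x hxK)

lemma cost_continuous {α : Type*} [NormedAddCommGroup α] :
    Continuous (fun p : α × α => ‖p.1 - p.2‖ ^ 2) := by
  exact ((continuous_fst.sub continuous_snd).norm).pow 2

/-! ### Decomposition of couplings with two-point marginals -/

lemma coupling_discrete {ρ μ : Measure (Euc 2)} [IsProbabilityMeasure ρ] [IsProbabilityMeasure μ]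
    {a b c d : Euc 2} (hab : a ≠ b) (hcd : c ≠ d)
    (hρ : ρ ({a, b} : Set (Euc 2))ᶜ = 0) (hμ : μ ({c, d} : Set (Euc 2))ᶜ = 0)
    {γ : Measure (Euc 2 × Euc 2)} (hγ : γ ∈ Couplings ρ μ)
    {f : Euc 2 × Euc 2 → ℝ} (hf : Continuous f) :
    ∃ pac pad pbc pbd : ℝ,
      0 ≤ pac ∧ 0 ≤ pad ∧ 0 ≤ pbc ∧ 0 ≤ pbd ∧
      pac + pad = (ρ {a}).toReal ∧ pbc + pbd = (ρ {b}).toReal ∧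
      pac + pbc = (μ {c}).toReal ∧ pad + pbd = (μ {d}).toReal ∧
      ∫ p, f p ∂γ = pac * f (a, c) + pad * f (a, d) + pbc * f (b, c) + pbd * f (b, d) := by
  classical
  haveI : IsProbabilityMeasure γ := coupling_prob hγ
  have hsab : MeasurableSet ({a, b} : Set (Euc 2)) := (Set.toFinite _).measurableSet
  have hscd : MeasurableSet ({c, d} : Set (Euc 2)) := (Set.toFinite _).measurableSet
  -- γ is concentrated on {a,b} ×ˢ {c,d}
  have hnull : γ ((({a, b} : Set (Euc 2)) ×ˢ ({c, d} : Set (Euc 2)))ᶜ) = 0 := by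
    rw [Set.compl_prod_eq_union]
    refine measure_union_null ?_ ?_
    · have : ({a, b} : Set (Euc 2))ᶜ ×ˢ (Set.univ : Set (Euc 2)) =
        Prod.fst ⁻¹' ({a, b} : Set (Euc 2))ᶜ := Set.prod_univ
      rw [this, coupling_fst hγ hsab.compl, hρ]
    · have : (Set.univ : Set (Euc 2)) ×ˢ ({c, d} : Set (Euc 2))ᶜ =
        Prod.snd ⁻¹' ({c, d} : Set (Euc 2))ᶜ := Set.univ_prod
      rw [this, coupling_snd hγ hscd.compl, hμ]
  have hae : ∀ᵐ p ∂γ, p ∈ ({a, b} : Set (Euc 2)) ×ˢ ({c, d} : Set (Euc 2)) := by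
    rw [ae_iff]; exact measure_mono_null (fun x hx => hx) hnull
  -- integrability of f
  have hint : Integrable f γ := by
    refine integrable_of_bound (K := ({a, b} : Set (Euc 2)) ×ˢ ({c, d} : Set (Euc 2)))
      hnull hf (C := max (max (|f (a,c)|) (|f (a,d)|)) (max (|f (b,c)|) (|f (b,d)|))) ?_
    rintro ⟨x, y⟩ ⟨hx, hy⟩
    rcases hx with rfl | rfl <;> rcases hy with rfl | rfl
    · exact le_max_of_le_left (le_max_left _ _)
    · exact le_max_of_le_left (le_max_right _ _)
    · exact le_max_of_le_right (le_max_left _ _)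
    · exact le_max_of_le_right (le_max_right _ _)
  -- the integral as a finite sum
  have hrestrict : γ.restrict (({a, b} : Set (Euc 2)) ×ˢ ({c, d} : Set (Euc 2))) = γ :=
    Measure.restrict_eq_self_of_ae_mem hae
  have hsetF : (({(a,c), (a,d), (b,c), (b,d)} : Finset (Euc 2 × Euc 2)) : Set (Euc 2 × Euc 2)) =
      ({a, b} : Set (Euc 2)) ×ˢ ({c, d} : Set (Euc 2)) := by
    ext ⟨x, y⟩
    simp only [Finset.coe_insert, Finset.coe_singleton, Set.mem_insert_iff,
      Set.mem_singleton_iff, Set.mem_prod, Prod.mk.injEq]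
    tauto
  have hIntOn : IntegrableOn f
      (↑({(a,c), (a,d), (b,c), (b,d)} : Finset (Euc 2 × Euc 2))) γ := by
    rw [hsetF]
    show Integrable f (γ.restrict _)
    rw [hrestrict]
    exact hint
  have hFsum : ∫ p, f p ∂γ =
      ∑ x ∈ ({(a,c), (a,d), (b,c), (b,d)} : Finset (Euc 2 × Euc 2)), (γ {x}).toReal • f x := by
    simp only [← measureReal_def]
    rw [← setIntegral_finset _ hIntOn, hsetF]
    show _ = ∫ p, f p ∂(γ.restrict _)
    rw [hrestrict]
  -- marginal identities
  have key : ∀ x y y' : Euc 2, y ≠ y' → μ ({y, y'} : Set (Euc 2))ᶜ = 0 →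
      γ {(x, y)} + γ {(x, y')} = γ (Prod.fst ⁻¹' {x}) := by
    intro x y y' hyy' hμ'
    have h1 : γ {(x, y)} + γ {(x, y')} = γ ({(x, y), (x, y')} : Set (Euc 2 × Euc 2)) := by
      rw [Set.insert_eq, measure_union (by simp [Set.disjoint_singleton, hyy'])
        (measurableSet_singleton _)]
    have h2 : ({(x, y), (x, y')} : Set (Euc 2 × Euc 2)) = ({x} : Set (Euc 2)) ×ˢ ({y, y'} : Set (Euc 2)) := by
      ext ⟨u, v⟩
      simp only [Set.mem_insert_iff, Set.mem_singleton_iff, Set.mem_prod, Prod.mk.injEq]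
      tauto
    have h3 : γ (({x} : Set (Euc 2)) ×ˢ ({y, y'} : Set (Euc 2))) = γ (Prod.fst ⁻¹' {x}) := by
      refine le_antisymm (measure_mono fun p hp' => hp'.1) ?_
      have hsplit : (Prod.fst ⁻¹' ({x} : Set (Euc 2)) : Set (Euc 2 × Euc 2)) ⊆
          (({x} : Set (Euc 2)) ×ˢ ({y, y'} : Set (Euc 2))) ∪ (Prod.snd ⁻¹' (({y, y'} : Set (Euc 2))ᶜ)) := by
        rintro ⟨u, v⟩ hu
        by_cases hv : v ∈ ({y, y'} : Set (Euc 2))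
        · exact Or.inl ⟨hu, hv⟩
        · exact Or.inr hv
      calc γ (Prod.fst ⁻¹' ({x} : Set (Euc 2))) ≤
          γ ((({x} : Set (Euc 2)) ×ˢ ({y, y'} : Set (Euc 2)))) + γ (Prod.snd ⁻¹' (({y, y'} : Set (Euc 2))ᶜ)) :=
            le_trans (measure_mono hsplit) (measure_union_le _ _)
        _ = γ ((({x} : Set (Euc 2)) ×ˢ ({y, y'} : Set (Euc 2)))) := by
            rw [coupling_snd hγ ?_, hμ', add_zero]
            · exact (Set.toFinite ({y, y'} : Set (Euc 2))).measurableSet.compl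
    rw [h1, h2, h3]
  have keyc : ∀ y x x' : Euc 2, x ≠ x' → ρ ({x, x'} : Set (Euc 2))ᶜ = 0 →
      γ {(x, y)} + γ {(x', y)} = γ (Prod.snd ⁻¹' {y}) := by
    intro y x x' hxx' hρ'
    have h1 : γ {(x, y)} + γ {(x', y)} = γ ({(x, y), (x', y)} : Set (Euc 2 × Euc 2)) := by
      rw [Set.insert_eq, measure_union (by simp [Set.disjoint_singleton, hxx'])
        (measurableSet_singleton _)]
    have h2 : ({(x, y), (x', y)} : Set (Euc 2 × Euc 2)) = ({x, x'} : Set (Euc 2)) ×ˢ ({y} : Set (Euc 2)) := by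
      ext ⟨u, v⟩
      simp only [Set.mem_insert_iff, Set.mem_singleton_iff, Set.mem_prod, Prod.mk.injEq]
      tauto
    have h3 : γ (({x, x'} : Set (Euc 2)) ×ˢ ({y} : Set (Euc 2))) = γ (Prod.snd ⁻¹' {y}) := by
      refine le_antisymm (measure_mono fun p hp' => hp'.2) ?_
      have hsplit : (Prod.snd ⁻¹' ({y} : Set (Euc 2)) : Set (Euc 2 × Euc 2)) ⊆
          (({x, x'} : Set (Euc 2)) ×ˢ ({y} : Set (Euc 2))) ∪ (Prod.fst ⁻¹' (({x, x'} : Set (Euc 2))ᶜ)) := by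
        rintro ⟨u, v⟩ hu
        by_cases hv : u ∈ ({x, x'} : Set (Euc 2))
        · exact Or.inl ⟨hv, hu⟩
        · exact Or.inr hv
      calc γ (Prod.snd ⁻¹' ({y} : Set (Euc 2))) ≤
          γ ((({x, x'} : Set (Euc 2)) ×ˢ ({y} : Set (Euc 2)))) + γ (Prod.fst ⁻¹' (({x, x'} : Set (Euc 2))ᶜ)) :=
            le_trans (measure_mono hsplit) (measure_union_le _ _)
        _ = γ ((({x, x'} : Set (Euc 2)) ×ˢ ({y} : Set (Euc 2)))) := by
            rw [coupling_fst hγ ?_, hρ', add_zero]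
            · exact (Set.toFinite ({x, x'} : Set (Euc 2))).measurableSet.compl
    rw [h1, h2, h3]
  refine ⟨(γ {(a,c)}).toReal, (γ {(a,d)}).toReal, (γ {(b,c)}).toReal, (γ {(b,d)}).toReal,
    ENNReal.toReal_nonneg, ENNReal.toReal_nonneg, ENNReal.toReal_nonneg, ENNReal.toReal_nonneg,
    ?_, ?_, ?_, ?_, ?_⟩
  · rw [← ENNReal.toReal_add (measure_ne_top _ _) (measure_ne_top _ _),
      key a c d hcd hμ, coupling_fst hγ (measurableSet_singleton a)]
  · rw [← ENNReal.toReal_add (measure_ne_top _ _) (measure_ne_top _ _),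
      key b c d hcd hμ, coupling_fst hγ (measurableSet_singleton b)]
  · rw [← ENNReal.toReal_add (measure_ne_top _ _) (measure_ne_top _ _),
      keyc c a b hab hρ, coupling_snd hγ (measurableSet_singleton c)]
  · rw [← ENNReal.toReal_add (measure_ne_top _ _) (measure_ne_top _ _),
      keyc d a b hab hρ, coupling_snd hγ (measurableSet_singleton d)]
  · rw [hFsum]
    have h1 : ((a,c) : Euc 2 × Euc 2) ∉ ({(a,d), (b,c), (b,d)} : Finset (Euc 2 × Euc 2)) := by
      simp [Prod.ext_iff, hab, hcd]
    have h2 : ((a,d) : Euc 2 × Euc 2) ∉ ({(b,c), (b,d)} : Finset (Euc 2 × Euc 2)) := by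
      simp [Prod.ext_iff, hab, hcd]
    have h3 : ((b,c) : Euc 2 × Euc 2) ∉ ({(b,d)} : Finset (Euc 2 × Euc 2)) := by
      simp [Prod.ext_iff, hab, hcd]
    rw [Finset.sum_insert h1, Finset.sum_insert h2, Finset.sum_insert h3, Finset.sum_singleton]
    simp only [smul_eq_mul]
    ring

/-! ### Lower bound for couplings with a two-point first marginal -/

lemma norm_sub_sq_le_bound {x y : Euc 2} {M R : ℝ} (hx : ‖x‖ ≤ M) (hy : ‖y‖ ≤ R) :
    |‖x - y‖ ^ 2| ≤ (M + R) ^ 2 := by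
  have h0 : (0:ℝ) ≤ ‖x - y‖ ^ 2 := by positivity
  rw [abs_of_nonneg h0]
  have h1 : ‖x - y‖ ≤ M + R := le_trans (norm_sub_le x y) (add_le_add hx hy)
  have h2 : (0:ℝ) ≤ ‖x - y‖ := norm_nonneg _
  nlinarith

lemma coupling_cost_ge_min {ρ ν : Measure (Euc 2)} [IsProbabilityMeasure ρ]
    [IsProbabilityMeasure ν] {a b : Euc 2} (hab : a ≠ b)
    (hρ : ρ ({a, b} : Set (Euc 2))ᶜ = 0) {R : ℝ} (hR : 0 ≤ R) (haR : ‖a‖ ≤ R) (hbR : ‖b‖ ≤ R)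
    (hν : ν (closedBall (0 : Euc 2) R)ᶜ = 0)
    {γ : Measure (Euc 2 × Euc 2)} (hγ : γ ∈ Couplings ρ ν) :
    ∫ y, min (‖a - y‖ ^ 2) (‖b - y‖ ^ 2) ∂ν ≤ ∫ p, ‖p.1 - p.2‖ ^ 2 ∂γ := by
  haveI : IsProbabilityMeasure γ := coupling_prob hγ
  have hsab : MeasurableSet ({a, b} : Set (Euc 2)) := (Set.toFinite _).measurableSet
  have hballm : MeasurableSet (closedBall (0 : Euc 2) R) := measurableSet_closedBall
  set f : Euc 2 × Euc 2 → ℝ := fun p => ‖p.1 - p.2‖ ^ 2 with hf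
  set K : Set (Euc 2 × Euc 2) := ({a, b} : Set (Euc 2)) ×ˢ closedBall (0 : Euc 2) R with hK
  have hnull : γ Kᶜ = 0 := by
    rw [hK, Set.compl_prod_eq_union]
    refine measure_union_null ?_ ?_
    · rw [Set.prod_univ, coupling_fst hγ hsab.compl, hρ]
    · rw [Set.univ_prod, coupling_snd hγ hballm.compl, hν]
  have hint : Integrable f γ := by
    refine integrable_of_bound (K := K) hnull cost_continuous (C := (R + R) ^ 2) ?_
    rintro ⟨x, y⟩ ⟨hx, hy⟩
    have hxR : ‖x‖ ≤ R := by rcases hx with rfl | rfl <;> assumption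
    exact norm_sub_sq_le_bound hxR (by simpa [mem_closedBall_zero_iff] using hy)
  -- decompose γ
  set T1 : Set (Euc 2 × Euc 2) := ({a} : Set (Euc 2)) ×ˢ (Set.univ : Set (Euc 2)) with hT1
  set T2 : Set (Euc 2 × Euc 2) := ({b} : Set (Euc 2)) ×ˢ (Set.univ : Set (Euc 2)) with hT2
  have hT1m : MeasurableSet T1 := (measurableSet_singleton a).prod .univ
  have hT2m : MeasurableSet T2 := (measurableSet_singleton b).prod .univ
  have hdisj : Disjoint T1 T2 := by
    rw [hT1, hT2, Set.disjoint_prod]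
    exact Or.inl (Set.disjoint_singleton.mpr hab)
  have hcup : γ.restrict (T1 ∪ T2) = γ := by
    refine Measure.restrict_eq_self_of_ae_mem ?_
    rw [ae_iff]
    refine measure_mono_null (fun p hp' => ?_) hnull
    intro hpK
    rcases hpK.1 with h | h
    · exact hp' (Or.inl ⟨h, trivial⟩)
    · exact hp' (Or.inr ⟨h, trivial⟩)
  set γ1 := γ.restrict T1 with hγ1
  set γ2 := γ.restrict T2 with hγ2
  set ν1 := γ1.map Prod.snd with hν1
  set ν2 := γ2.map Prod.snd with hν2
  have hsum : ν1 + ν2 = ν := by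
    rw [hν1, hν2, ← Measure.map_add _ _ measurable_snd, hγ1, hγ2,
      ← Measure.restrict_union hdisj hT2m, hcup, hγ.2]
  have hν1le : ν1 ≤ ν := hsum ▸ Measure.le_add_right le_rfl
  have hν2le : ν2 ≤ ν := hsum ▸ Measure.le_add_left le_rfl
  haveI : IsFiniteMeasure ν1 :=
    ⟨lt_of_le_of_lt (hν1le Set.univ) (measure_lt_top ν _)⟩
  haveI : IsFiniteMeasure ν2 :=
    ⟨lt_of_le_of_lt (hν2le Set.univ) (measure_lt_top ν _)⟩
  have hν1ball : ν1 (closedBall (0 : Euc 2) R)ᶜ = 0 :=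
    le_antisymm (le_trans (hν1le _) (le_of_eq hν)) (zero_le)
  have hν2ball : ν2 (closedBall (0 : Euc 2) R)ᶜ = 0 :=
    le_antisymm (le_trans (hν2le _) (le_of_eq hν)) (zero_le)
  -- integrability of the various integrands
  have hcont1 : Continuous (fun y : Euc 2 => ‖a - y‖ ^ 2) :=
    ((continuous_const.sub continuous_id).norm).pow 2
  have hcont2 : Continuous (fun y : Euc 2 => ‖b - y‖ ^ 2) :=
    ((continuous_const.sub continuous_id).norm).pow 2
  have hcontm : Continuous (fun y : Euc 2 => min (‖a - y‖ ^ 2) (‖b - y‖ ^ 2)) :=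
    hcont1.min hcont2
  have hboundm : ∀ y ∈ closedBall (0 : Euc 2) R, |min (‖a - y‖ ^ 2) (‖b - y‖ ^ 2)| ≤ (R + R) ^ 2 := by
    intro y hy
    rw [abs_of_nonneg (le_min (by positivity) (by positivity))]
    exact le_trans (min_le_left _ _) (by
      have := norm_sub_sq_le_bound haR (by simpa [mem_closedBall_zero_iff] using hy)
      rwa [abs_of_nonneg (by positivity)] at this)
  have hbound1 : ∀ y ∈ closedBall (0 : Euc 2) R, |‖a - y‖ ^ 2| ≤ (R + R) ^ 2 := fun y hy =>
    norm_sub_sq_le_bound haR (by simpa [mem_closedBall_zero_iff] using hy)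
  have hbound2 : ∀ y ∈ closedBall (0 : Euc 2) R, |‖b - y‖ ^ 2| ≤ (R + R) ^ 2 := fun y hy =>
    norm_sub_sq_le_bound hbR (by simpa [mem_closedBall_zero_iff] using hy)
  have hintm1 : Integrable (fun y => min (‖a - y‖ ^ 2) (‖b - y‖ ^ 2)) ν1 :=
    integrable_of_bound hν1ball hcontm hboundm
  have hintm2 : Integrable (fun y => min (‖a - y‖ ^ 2) (‖b - y‖ ^ 2)) ν2 :=
    integrable_of_bound hν2ball hcontm hboundm
  have hint1 : Integrable (fun y => ‖a - y‖ ^ 2) ν1 := integrable_of_bound hν1ball hcont1 hbound1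
  have hint2 : Integrable (fun y => ‖b - y‖ ^ 2) ν2 := integrable_of_bound hν2ball hcont2 hbound2
  -- identify the two pieces of the cost
  have hface1 : ∀ᵐ p ∂γ1, f p = ‖a - p.2‖ ^ 2 := by
    rw [hγ1]
    filter_upwards [ae_restrict_mem hT1m] with p hp'
    rcases hp' with ⟨hp1, -⟩
    simp only [Set.mem_singleton_iff] at hp1
    simp only [hf]
    rw [hp1]
  have hface2 : ∀ᵐ p ∂γ2, f p = ‖b - p.2‖ ^ 2 := by
    rw [hγ2]
    filter_upwards [ae_restrict_mem hT2m] with p hp'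
    rcases hp' with ⟨hp1, -⟩
    simp only [Set.mem_singleton_iff] at hp1
    simp only [hf]
    rw [hp1]
  have hmap1 : ∫ p, ‖a - p.2‖ ^ 2 ∂γ1 = ∫ y, ‖a - y‖ ^ 2 ∂ν1 := by
    rw [hν1, integral_map measurable_snd.aemeasurable hcont1.aestronglyMeasurable]
  have hmap2 : ∫ p, ‖b - p.2‖ ^ 2 ∂γ2 = ∫ y, ‖b - y‖ ^ 2 ∂ν2 := by
    rw [hν2, integral_map measurable_snd.aemeasurable hcont2.aestronglyMeasurable]
  have hsplit : ∫ p, f p ∂γ = ∫ p, f p ∂γ1 + ∫ p, f p ∂γ2 := by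
    conv_lhs => rw [← hcup]
    rw [Measure.restrict_union hdisj hT2m,
      integral_add_measure (hint.restrict) (hint.restrict)]
  calc ∫ y, min (‖a - y‖ ^ 2) (‖b - y‖ ^ 2) ∂ν
      = ∫ y, min (‖a - y‖ ^ 2) (‖b - y‖ ^ 2) ∂ν1
        + ∫ y, min (‖a - y‖ ^ 2) (‖b - y‖ ^ 2) ∂ν2 := by
        rw [← integral_add_measure hintm1 hintm2, hsum]
    _ ≤ ∫ y, ‖a - y‖ ^ 2 ∂ν1 + ∫ y, ‖b - y‖ ^ 2 ∂ν2 := by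
        apply add_le_add
        · exact integral_mono hintm1 hint1 fun y => min_le_left _ _
        · exact integral_mono hintm2 hint2 fun y => min_le_right _ _
    _ = ∫ p, f p ∂γ1 + ∫ p, f p ∂γ2 := by
        rw [← hmap1, ← hmap2, integral_congr_ae hface1, integral_congr_ae hface2]
    _ = ∫ p, f p ∂γ := hsplit.symm

/-! ### The specific configuration -/

def ptA : Euc 2 := pt 0 1
def ptB : Euc 2 := pt 0 (-1)
def ptE1 (ε s : ℝ) : Euc 2 := pt s (ε / 2)
def ptE2 (ε s : ℝ) : Euc 2 := pt (-s) (-(ε / 2))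
def ptM1 (ε s : ℝ) : Euc 2 := pt (s / 2) (1 / 2 + ε / 4)
def ptM2 (ε s : ℝ) : Euc 2 := pt (-(s / 2)) (-(1 / 2 + ε / 4))

/-- the candidate barycenter -/
def mustar (ε s : ℝ) : Measure (Euc 2) := hp (ptM1 ε s) (ptM2 ε s)

instance mustar_prob (ε s : ℝ) : IsProbabilityMeasure (mustar ε s) := hp_prob _ _

/-- the optimal half transport cost -/
def kk (ε : ℝ) : ℝ := 1 / 4 + (1 / 2 - ε / 4) ^ 2

lemma rho1_hp : rho1 = hp ptA ptB := rfl

lemma rho2_hp {ε s : ℝ} (hs : s = 1 ∨ s = -1) : rho2 (s * ε) = hp (ptE1 ε s) (ptE2 ε s) := by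
  rcases hs with rfl | rfl
  · have h1 : (1 : ℝ) * ε / 2 = ε / 2 := by ring
    rw [rho2_eq, h1]
    rfl
  · rw [rho2_eq, ptE1, ptE2]
    rw [show (-1 : ℝ) * ε / 2 = -(ε / 2) by ring]
    rw [show (-(-(ε / 2) : ℝ)) = ε / 2 by ring]
    rw [show (-(-1 : ℝ)) = (1 : ℝ) by norm_num]
    exact hp_comm _ _

section Arith

variable {ε s : ℝ}

lemma dist_sq_pt (a b c d : ℝ) : ‖pt a b - pt c d‖ ^ 2 = (a - c) ^ 2 + (b - d) ^ 2 := by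
  rw [norm_sub_sq_euc]
  rfl

lemma hs_sq (hs : s = 1 ∨ s = -1) : s ^ 2 = 1 := by rcases hs with rfl | rfl <;> norm_num

lemma dAM1 (hs : s = 1 ∨ s = -1) : ‖ptA - ptM1 ε s‖ ^ 2 = kk ε := by
  rw [ptA, ptM1, dist_sq_pt, kk]
  linear_combination (1 / 4 : ℝ) * hs_sq hs

lemma dBM2 (hs : s = 1 ∨ s = -1) : ‖ptB - ptM2 ε s‖ ^ 2 = kk ε := by
  rw [ptB, ptM2, dist_sq_pt, kk]
  linear_combination (1 / 4 : ℝ) * hs_sq hs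

lemma dE1M1 (hs : s = 1 ∨ s = -1) : ‖ptE1 ε s - ptM1 ε s‖ ^ 2 = kk ε := by
  rw [ptE1, ptM1, dist_sq_pt, kk]
  linear_combination (1 / 4 : ℝ) * hs_sq hs

lemma dE2M2 (hs : s = 1 ∨ s = -1) : ‖ptE2 ε s - ptM2 ε s‖ ^ 2 = kk ε := by
  rw [ptE2, ptM2, dist_sq_pt, kk]
  linear_combination (1 / 4 : ℝ) * hs_sq hs

lemma dAM2 (hs : s = 1 ∨ s = -1) : ‖ptA - ptM2 ε s‖ ^ 2 = 1 / 4 + (3 / 2 + ε / 4) ^ 2 := by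
  rw [ptA, ptM2, dist_sq_pt]
  linear_combination (1 / 4 : ℝ) * hs_sq hs

lemma dBM1 (hs : s = 1 ∨ s = -1) : ‖ptB - ptM1 ε s‖ ^ 2 = 1 / 4 + (3 / 2 + ε / 4) ^ 2 := by
  rw [ptB, ptM1, dist_sq_pt]
  linear_combination (1 / 4 : ℝ) * hs_sq hs

lemma dE1M2 (hs : s = 1 ∨ s = -1) : ‖ptE1 ε s - ptM2 ε s‖ ^ 2 = 9 / 4 + (1 / 2 + 3 * ε / 4) ^ 2 := by
  rw [ptE1, ptM2, dist_sq_pt]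
  linear_combination (9 / 4 : ℝ) * hs_sq hs

lemma dE2M1 (hs : s = 1 ∨ s = -1) : ‖ptE2 ε s - ptM1 ε s‖ ^ 2 = 9 / 4 + (1 / 2 + 3 * ε / 4) ^ 2 := by
  rw [ptE2, ptM1, dist_sq_pt]
  linear_combination (9 / 4 : ℝ) * hs_sq hs

/-- pointwise lower bound, real version -/
lemma g_bound_real (ε s y0 y1 : ℝ) (hε : 0 ≤ ε) (hs2 : s ^ 2 = 1) :
    2 * (1 / 4 + (1 / 2 - ε / 4) ^ 2) ≤
      min ((0 - y0) ^ 2 + (1 - y1) ^ 2) ((0 - y0) ^ 2 + (-1 - y1) ^ 2)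
      + min ((s - y0) ^ 2 + (ε / 2 - y1) ^ 2) ((-s - y0) ^ 2 + (-(ε / 2) - y1) ^ 2) := by
  rcases min_cases ((0 - y0) ^ 2 + (1 - y1) ^ 2) ((0 - y0) ^ 2 + (-1 - y1) ^ 2) with
    ⟨h1, h1'⟩ | ⟨h1, h1'⟩ <;>
  rcases min_cases ((s - y0) ^ 2 + (ε / 2 - y1) ^ 2) ((-s - y0) ^ 2 + (-(ε / 2) - y1) ^ 2) with
    ⟨h2, h2'⟩ | ⟨h2, h2'⟩ <;> rw [h1, h2]
  · have hkey : ((0 - y0) ^ 2 + (1 - y1) ^ 2) + ((s - y0) ^ 2 + (ε / 2 - y1) ^ 2)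
        = 2 * (1 / 4 + (1 / 2 - ε / 4) ^ 2)
          + ((s - 2 * y0) ^ 2 + (1 + ε / 2 - 2 * y1) ^ 2) / 2 + (s ^ 2 - 1) / 2 := by ring
    linarith [sq_nonneg (s - 2 * y0), sq_nonneg (1 + ε / 2 - 2 * y1)]
  · have hkey : ((0 - y0) ^ 2 + (1 - y1) ^ 2) + ((-s - y0) ^ 2 + (-(ε / 2) - y1) ^ 2)
        = 2 * (1 / 4 + (1 / 2 - ε / 4) ^ 2)
          + ((s + 2 * y0) ^ 2 + (1 - ε / 2 - 2 * y1) ^ 2) / 2 + (s ^ 2 - 1) / 2 + ε := by ring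
    linarith [sq_nonneg (s + 2 * y0), sq_nonneg (1 - ε / 2 - 2 * y1)]
  · have hkey : ((0 - y0) ^ 2 + (-1 - y1) ^ 2) + ((s - y0) ^ 2 + (ε / 2 - y1) ^ 2)
        = 2 * (1 / 4 + (1 / 2 - ε / 4) ^ 2)
          + ((s - 2 * y0) ^ 2 + (1 - ε / 2 + 2 * y1) ^ 2) / 2 + (s ^ 2 - 1) / 2 + ε := by ring
    linarith [sq_nonneg (s - 2 * y0), sq_nonneg (1 - ε / 2 + 2 * y1)]
  · have hkey : ((0 - y0) ^ 2 + (-1 - y1) ^ 2) + ((-s - y0) ^ 2 + (-(ε / 2) - y1) ^ 2)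
        = 2 * (1 / 4 + (1 / 2 - ε / 4) ^ 2)
          + ((s + 2 * y0) ^ 2 + (1 + ε / 2 + 2 * y1) ^ 2) / 2 + (s ^ 2 - 1) / 2 := by ring
    linarith [sq_nonneg (s + 2 * y0), sq_nonneg (1 + ε / 2 + 2 * y1)]

lemma g_eq_real (ε s y0 y1 : ℝ) (hε : 0 < ε) (hs2 : s ^ 2 = 1)
    (h : min ((0 - y0) ^ 2 + (1 - y1) ^ 2) ((0 - y0) ^ 2 + (-1 - y1) ^ 2)
      + min ((s - y0) ^ 2 + (ε / 2 - y1) ^ 2) ((-s - y0) ^ 2 + (-(ε / 2) - y1) ^ 2)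
      = 2 * (1 / 4 + (1 / 2 - ε / 4) ^ 2)) :
    (y0 = s / 2 ∧ y1 = 1 / 2 + ε / 4) ∨ (y0 = -(s / 2) ∧ y1 = -(1 / 2 + ε / 4)) := by
  rcases min_cases ((0 - y0) ^ 2 + (1 - y1) ^ 2) ((0 - y0) ^ 2 + (-1 - y1) ^ 2) with
    ⟨h1, h1'⟩ | ⟨h1, h1'⟩ <;>
  rcases min_cases ((s - y0) ^ 2 + (ε / 2 - y1) ^ 2) ((-s - y0) ^ 2 + (-(ε / 2) - y1) ^ 2) with
    ⟨h2, h2'⟩ | ⟨h2, h2'⟩ <;> rw [h1, h2] at h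
  · left
    have hkey : ((0 - y0) ^ 2 + (1 - y1) ^ 2) + ((s - y0) ^ 2 + (ε / 2 - y1) ^ 2)
        = 2 * (1 / 4 + (1 / 2 - ε / 4) ^ 2)
          + ((s - 2 * y0) ^ 2 + (1 + ε / 2 - 2 * y1) ^ 2) / 2 + (s ^ 2 - 1) / 2 := by ring
    have hz1 : s - 2 * y0 = 0 := by
      have hq : (s - 2 * y0) ^ 2 ≤ 0 := by linarith [sq_nonneg (1 + ε / 2 - 2 * y1)]
      exact pow_eq_zero_iff two_ne_zero |>.mp (le_antisymm hq (sq_nonneg _))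
    have hz2 : 1 + ε / 2 - 2 * y1 = 0 := by
      have hq : (1 + ε / 2 - 2 * y1) ^ 2 ≤ 0 := by linarith [sq_nonneg (s - 2 * y0)]
      exact pow_eq_zero_iff two_ne_zero |>.mp (le_antisymm hq (sq_nonneg _))
    constructor <;> linarith
  · exfalso
    have hkey : ((0 - y0) ^ 2 + (1 - y1) ^ 2) + ((-s - y0) ^ 2 + (-(ε / 2) - y1) ^ 2)
        = 2 * (1 / 4 + (1 / 2 - ε / 4) ^ 2)
          + ((s + 2 * y0) ^ 2 + (1 - ε / 2 - 2 * y1) ^ 2) / 2 + (s ^ 2 - 1) / 2 + ε := by ring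
    linarith [sq_nonneg (s + 2 * y0), sq_nonneg (1 - ε / 2 - 2 * y1)]
  · exfalso
    have hkey : ((0 - y0) ^ 2 + (-1 - y1) ^ 2) + ((s - y0) ^ 2 + (ε / 2 - y1) ^ 2)
        = 2 * (1 / 4 + (1 / 2 - ε / 4) ^ 2)
          + ((s - 2 * y0) ^ 2 + (1 - ε / 2 + 2 * y1) ^ 2) / 2 + (s ^ 2 - 1) / 2 + ε := by ring
    linarith [sq_nonneg (s - 2 * y0), sq_nonneg (1 - ε / 2 + 2 * y1)]
  · right
    have hkey : ((0 - y0) ^ 2 + (-1 - y1) ^ 2) + ((-s - y0) ^ 2 + (-(ε / 2) - y1) ^ 2)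
        = 2 * (1 / 4 + (1 / 2 - ε / 4) ^ 2)
          + ((s + 2 * y0) ^ 2 + (1 + ε / 2 + 2 * y1) ^ 2) / 2 + (s ^ 2 - 1) / 2 := by ring
    have hz1 : s + 2 * y0 = 0 := by
      have hq : (s + 2 * y0) ^ 2 ≤ 0 := by linarith [sq_nonneg (1 + ε / 2 + 2 * y1)]
      exact pow_eq_zero_iff two_ne_zero |>.mp (le_antisymm hq (sq_nonneg _))
    have hz2 : 1 + ε / 2 + 2 * y1 = 0 := by
      have hq : (1 + ε / 2 + 2 * y1) ^ 2 ≤ 0 := by linarith [sq_nonneg (s + 2 * y0)]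
      exact pow_eq_zero_iff two_ne_zero |>.mp (le_antisymm hq (sq_nonneg _))
    constructor <;> linarith

/-- pointwise lower bound for the barycenter functional integrand -/
lemma g_bound (hε : 0 < ε) (hs : s = 1 ∨ s = -1) (y : Euc 2) :
    2 * kk ε ≤ min (‖ptA - y‖ ^ 2) (‖ptB - y‖ ^ 2)
      + min (‖ptE1 ε s - y‖ ^ 2) (‖ptE2 ε s - y‖ ^ 2) := by
  have e1 : ‖ptA - y‖ ^ 2 = (0 - y 0) ^ 2 + (1 - y 1) ^ 2 := norm_sub_sq_euc _ _
  have e2 : ‖ptB - y‖ ^ 2 = (0 - y 0) ^ 2 + (-1 - y 1) ^ 2 := norm_sub_sq_euc _ _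
  have e3 : ‖ptE1 ε s - y‖ ^ 2 = (s - y 0) ^ 2 + (ε / 2 - y 1) ^ 2 := norm_sub_sq_euc _ _
  have e4 : ‖ptE2 ε s - y‖ ^ 2 = (-s - y 0) ^ 2 + (-(ε / 2) - y 1) ^ 2 := norm_sub_sq_euc _ _
  rw [e1, e2, e3, e4, kk]
  exact g_bound_real ε s (y 0) (y 1) hε.le (hs_sq hs)

/-- equality forces `y ∈ {M1, M2}` -/
lemma g_eq (hε : 0 < ε) (hs : s = 1 ∨ s = -1) (y : Euc 2)
    (h : min (‖ptA - y‖ ^ 2) (‖ptB - y‖ ^ 2)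
      + min (‖ptE1 ε s - y‖ ^ 2) (‖ptE2 ε s - y‖ ^ 2) = 2 * kk ε) :
    y = ptM1 ε s ∨ y = ptM2 ε s := by
  have e1 : ‖ptA - y‖ ^ 2 = (0 - y 0) ^ 2 + (1 - y 1) ^ 2 := norm_sub_sq_euc _ _
  have e2 : ‖ptB - y‖ ^ 2 = (0 - y 0) ^ 2 + (-1 - y 1) ^ 2 := norm_sub_sq_euc _ _
  have e3 : ‖ptE1 ε s - y‖ ^ 2 = (s - y 0) ^ 2 + (ε / 2 - y 1) ^ 2 := norm_sub_sq_euc _ _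
  have e4 : ‖ptE2 ε s - y‖ ^ 2 = (-s - y 0) ^ 2 + (-(ε / 2) - y 1) ^ 2 := norm_sub_sq_euc _ _
  rw [e1, e2, e3, e4, kk] at h
  rcases g_eq_real ε s (y 0) (y 1) hε (hs_sq hs) h with ⟨h0, h1⟩ | ⟨h0, h1⟩
  · exact Or.inl ((euc_eq_iff y _ _).mpr ⟨h0, h1⟩)
  · exact Or.inr ((euc_eq_iff y _ _).mpr ⟨h0, h1⟩)

end Arith

/-! ### Identification of the barycenter -/

lemma norm_le_of_sq {x : Euc 2} {R : ℝ} (hR : 0 ≤ R) (h : ‖x‖ ^ 2 ≤ R ^ 2) : ‖x‖ ≤ R := by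
  nlinarith [norm_nonneg x]

lemma hp_singleton_fst {α : Type*} [MeasurableSpace α] [MeasurableSingletonClass α] {p q : α}
    (h : p ≠ q) : hp p q {p} = 2⁻¹ := by
  rw [hp_apply_of_msets (measurableSet_singleton p)]
  simp [Set.indicator_apply, h.symm]

lemma hp_singleton_snd {α : Type*} [MeasurableSpace α] [MeasurableSingletonClass α] {p q : α}
    (h : p ≠ q) : hp p q {q} = 2⁻¹ := by
  rw [hp_comm]; exact hp_singleton_fst h.symm

lemma probOn_hp {p q : Euc 2} {R : ℝ} (hp' : ‖p‖ ≤ R) (hq' : ‖q‖ ≤ R) :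
    ProbOn (closedBall (0 : Euc 2) R) (hp p q) :=
  ⟨hp_prob p q, hp_compl_zero measurableSet_closedBall
    (mem_closedBall_zero_iff.mpr hp') (mem_closedBall_zero_iff.mpr hq')⟩

/-- `Fvar` of `Pm` as a sum of two Wasserstein costs. -/
lemma Fvar_eq (ε : ℝ) (ν : Measure (Euc 2)) :
    Fvar (Pm ε) ν = (W2 rho1 ν ^ 2 + W2 (rho2 ε) ν ^ 2) / 4 := by
  rw [Fvar, Pm_eq, integral_hp (measurableSet_singleton_measure rho1)
    (measurableSet_singleton_measure (rho2 ε))]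
  ring

/-- reconstruction of a measure concentrated on two points -/
lemma eq_hp_of {ν : Measure (Euc 2)} [IsProbabilityMeasure ν] {p q : Euc 2} (hpq : p ≠ q)
    (hc : ν ({p, q} : Set (Euc 2))ᶜ = 0) (hp1 : ν {p} = 2⁻¹) : ν = hp p q := by
  have hms : MeasurableSet ({p, q} : Set (Euc 2)) := (Set.toFinite _).measurableSet
  have hsum : ν {p} + ν {q} = 1 := by
    have h1 : ν ({p, q} : Set (Euc 2)) = 1 := by
      have := measure_add_measure_compl (μ := ν) hms
      rwa [hc, add_zero, measure_univ] at this
    rw [← h1, Set.insert_eq, measure_union (Set.disjoint_singleton.mpr hpq)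
      (measurableSet_singleton _)]
  have hq1 : ν {q} = 2⁻¹ := by
    rw [hp1] at hsum
    have h2 : (2 : ℝ≥0∞)⁻¹ + 2⁻¹ = 1 := ENNReal.inv_two_add_inv_two
    rw [← h2] at hsum
    exact (ENNReal.add_right_inj (by norm_num)).mp hsum
  ext s hs
  have hsplit : ν (s ∩ {p, q}) + ν (s \ {p, q}) = ν s := measure_inter_add_diff s hms
  have hdiff : ν (s \ {p, q}) = 0 :=
    measure_mono_null (fun x hx => hx.2) hc
  rw [hp_apply_of_msets hs]
  by_cases hps : p ∈ s <;> by_cases hqs : q ∈ s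
  · have : s ∩ {p, q} = {p, q} := Set.inter_eq_right.mpr (by
      rintro x (rfl | rfl)
      exacts [hps, hqs])
    rw [← hsplit, hdiff, add_zero, this, Set.insert_eq,
      measure_union (Set.disjoint_singleton.mpr hpq) (measurableSet_singleton _), hp1, hq1]
    rw [Set.indicator_of_mem hps, Set.indicator_of_mem hqs]
    simp [mul_add]
  · have : s ∩ {p, q} = {p} := by
      ext x
      constructor
      · rintro ⟨hxs, rfl | rfl⟩
        · rfl
        · exact absurd hxs hqs
      · rintro rfl
        exact ⟨hps, Or.inl rfl⟩
    rw [← hsplit, hdiff, add_zero, this, hp1]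
    rw [Set.indicator_of_mem hps, Set.indicator_of_notMem hqs]
    simp
  · have : s ∩ {p, q} = {q} := by
      ext x
      constructor
      · rintro ⟨hxs, rfl | rfl⟩
        · exact absurd hxs hps
        · rfl
      · rintro rfl
        exact ⟨hqs, Or.inr rfl⟩
    rw [← hsplit, hdiff, add_zero, this, hq1]
    rw [Set.indicator_of_notMem hps, Set.indicator_of_mem hqs]
    simp
  · have : s ∩ {p, q} = ∅ := by
      ext x
      simp only [Set.mem_inter_iff, Set.mem_empty_iff_false, iff_false, not_and]
      rintro hxs (rfl | rfl)
      exacts [hps hxs, hqs hxs]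
    rw [← hsplit, hdiff, add_zero, this, measure_empty]
    rw [Set.indicator_of_notMem hps, Set.indicator_of_notMem hqs]
    simp

/-- LP bound for discrete optimal transport between two symmetric two-point configurations -/
lemma lp_bound {kv Lv pac pad pbc pbd t : ℝ} (hL : kv + 2 ≤ Lv)
    (h1 : 0 ≤ pac) (h2 : 0 ≤ pad) (h3 : 0 ≤ pbc) (h4 : 0 ≤ pbd)
    (e1 : pac + pad = 1 / 2) (e2 : pbc + pbd = 1 / 2) (e3 : pac + pbc = t) :
    kv + 2 * (t - 1 / 2) ≤ pac * kv + pad * Lv + pbc * Lv + pbd * kv ∧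
    kv + 2 * (1 / 2 - t) ≤ pac * kv + pad * Lv + pbc * Lv + pbd * kv := by
  have hsum4 : pac + pad + pbc + pbd = 1 := by linarith
  have hkv : kv * (pac + pad + pbc + pbd) = kv := by rw [hsum4, mul_one]
  have hprod : (0:ℝ) ≤ (Lv - kv - 2) * (pad + pbc) :=
    mul_nonneg (by linarith) (by linarith)
  constructor <;> nlinarith [hkv, hprod]

set_option linter.unusedVariables false

/-- integrability of the min-distance integrand -/
lemma integrable_min_dist {ν : Measure (Euc 2)} [IsFiniteMeasure ν] {R : ℝ}
    (hν : ν (closedBall (0 : Euc 2) R)ᶜ = 0) (a b : Euc 2) :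
    Integrable (fun y => min (‖a - y‖ ^ 2) (‖b - y‖ ^ 2)) ν := by
  refine integrable_of_bound hν
    ((((continuous_const.sub continuous_id).norm).pow 2).min
      (((continuous_const.sub continuous_id).norm).pow 2))
    (C := (max ‖a‖ ‖b‖ + |R|) ^ 2) ?_
  intro y hy
  have hyR : ‖y‖ ≤ |R| := le_trans (mem_closedBall_zero_iff.mp hy) (le_abs_self R)
  have h1 := norm_sub_sq_le_bound (le_max_left ‖a‖ ‖b‖) hyR
  rw [abs_of_nonneg (le_min (by positivity) (by positivity))]
  refine le_trans (min_le_left _ _) ?_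
  calc ‖a - y‖ ^ 2 = |‖a - y‖ ^ 2| := (abs_of_nonneg (by positivity)).symm
    _ ≤ (max ‖a‖ ‖b‖ + |R|) ^ 2 := h1

/-- **Main characterization**: any barycenter of `Pm (s * ε)` equals `mustar ε s`. -/
lemma bary_char {R : ℝ} (hR : 2 ≤ R) {ε s : ℝ} (hε : 0 < ε) (hε' : ε ≤ 1 / 2)
    (hs : s = 1 ∨ s = -1) {μ : Measure (Euc 2)}
    (h : IsBary (closedBall (0 : Euc 2) R) (Pm (s * ε)) μ) :
    μ = mustar ε s := by
  obtain ⟨⟨hμprob, hμball⟩, hmin⟩ := h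
  haveI := hμprob
  have hs2 := hs_sq hs
  have hRnn : (0 : ℝ) ≤ R := by linarith
  have hsabs : |s| = 1 := by rcases hs with rfl | rfl <;> norm_num
  -- distinctness
  have hAB : ptA ≠ ptB := by
    rw [ptA, ptB, Ne, pt_eq_pt_iff]; norm_num
  have hE : ptE1 ε s ≠ ptE2 ε s := by
    rw [ptE1, ptE2, Ne, pt_eq_pt_iff]
    rintro ⟨-, h2⟩
    have : ε = 0 := by linarith
    exact hε.ne' this
  have hM : ptM1 ε s ≠ ptM2 ε s := by
    rw [ptM1, ptM2, Ne, pt_eq_pt_iff]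
    rintro ⟨-, h2⟩
    linarith
  -- norms of the configuration points
  have hnA : ‖ptA‖ ≤ R := by
    refine norm_le_of_sq hRnn ?_
    rw [ptA, norm_sq_euc]
    show (0:ℝ) ^ 2 + 1 ^ 2 ≤ R ^ 2
    nlinarith
  have hnB : ‖ptB‖ ≤ R := by
    refine norm_le_of_sq hRnn ?_
    rw [ptB, norm_sq_euc]
    show (0:ℝ) ^ 2 + (-1) ^ 2 ≤ R ^ 2
    nlinarith
  have hnE1 : ‖ptE1 ε s‖ ≤ R := by
    refine norm_le_of_sq hRnn ?_
    rw [ptE1, norm_sq_euc]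
    show s ^ 2 + (ε / 2) ^ 2 ≤ R ^ 2
    nlinarith
  have hnE2 : ‖ptE2 ε s‖ ≤ R := by
    refine norm_le_of_sq hRnn ?_
    rw [ptE2, norm_sq_euc]
    show (-s) ^ 2 + (-(ε / 2)) ^ 2 ≤ R ^ 2
    nlinarith
  have hnM1 : ‖ptM1 ε s‖ ≤ R := by
    refine norm_le_of_sq hRnn ?_
    rw [ptM1, norm_sq_euc]
    show (s / 2) ^ 2 + (1 / 2 + ε / 4) ^ 2 ≤ R ^ 2
    nlinarith
  have hnM2 : ‖ptM2 ε s‖ ≤ R := by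
    refine norm_le_of_sq hRnn ?_
    rw [ptM2, norm_sq_euc]
    show (-(s / 2)) ^ 2 + (-(1 / 2 + ε / 4)) ^ 2 ≤ R ^ 2
    nlinarith
  -- concentration of the data measures
  have hρ1c : rho1 ({ptA, ptB} : Set (Euc 2))ᶜ = 0 := by
    rw [rho1_hp]
    exact hp_compl_zero (Set.toFinite _).measurableSet (Set.mem_insert _ _)
      (Set.mem_insert_of_mem _ rfl)
  have hρ2c : rho2 (s * ε) ({ptE1 ε s, ptE2 ε s} : Set (Euc 2))ᶜ = 0 := by
    rw [rho2_hp hs]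
    exact hp_compl_zero (Set.toFinite _).measurableSet (Set.mem_insert _ _)
      (Set.mem_insert_of_mem _ rfl)
  -- upper bound via the candidate barycenter
  have hMprobOn : ProbOn (closedBall (0 : Euc 2) R) (mustar ε s) := probOn_hp hnM1 hnM2
  have hupper : Fvar (Pm (s * ε)) (mustar ε s) ≤ kk ε / 2 := by
    rw [Fvar_eq]
    have h1 : W2 rho1 (mustar ε s) ^ 2 ≤ kk ε := by
      rw [rho1_hp, mustar]
      refine le_trans (W2_sq_hp_le _ _ _ _) ?_
      rw [dAM1 hs, dBM2 hs]
      linarith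
    have h2 : W2 (rho2 (s * ε)) (mustar ε s) ^ 2 ≤ kk ε := by
      rw [rho2_hp hs, mustar]
      refine le_trans (W2_sq_hp_le _ _ _ _) ?_
      rw [dE1M1 hs, dE2M2 hs]
      linarith
    linarith
  have hFμ : W2 rho1 μ ^ 2 + W2 (rho2 (s * ε)) μ ^ 2 ≤ 2 * kk ε := by
    have := le_trans (hmin _ hMprobOn) hupper
    rw [Fvar_eq] at this
    linarith
  -- lower bounds by the min-distance integrals
  have hlow1 : ∫ y, min (‖ptA - y‖ ^ 2) (‖ptB - y‖ ^ 2) ∂μ ≤ W2 rho1 μ ^ 2 :=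
    le_W2_sq fun γ hγ => coupling_cost_ge_min hAB hρ1c hRnn hnA hnB hμball hγ
  have hlow2 : ∫ y, min (‖ptE1 ε s - y‖ ^ 2) (‖ptE2 ε s - y‖ ^ 2) ∂μ ≤ W2 (rho2 (s * ε)) μ ^ 2 :=
    le_W2_sq fun γ hγ => coupling_cost_ge_min hE hρ2c hRnn hnE1 hnE2 hμball hγ
  -- the integrand is pointwise at least 2 kk, with equality only on {M1, M2}
  have hint1 : Integrable (fun y => min (‖ptA - y‖ ^ 2) (‖ptB - y‖ ^ 2)) μ :=
    integrable_min_dist hμball _ _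
  have hint2 : Integrable (fun y => min (‖ptE1 ε s - y‖ ^ 2) (‖ptE2 ε s - y‖ ^ 2)) μ :=
    integrable_min_dist hμball _ _
  set g : Euc 2 → ℝ := fun y => min (‖ptA - y‖ ^ 2) (‖ptB - y‖ ^ 2)
    + min (‖ptE1 ε s - y‖ ^ 2) (‖ptE2 ε s - y‖ ^ 2) with hg
  have hintg : Integrable g μ := hint1.add hint2
  have hgle : ∫ y, g y ∂μ ≤ 2 * kk ε := by
    rw [hg]
    rw [integral_add hint1 hint2]
    linarith
  have hgge : ∀ y, 2 * kk ε ≤ g y := fun y => g_bound hε hs y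
  have hnn : (0 : Euc 2 → ℝ) ≤ fun y => g y - 2 * kk ε := fun y => sub_nonneg.mpr (hgge y)
  have hzero : ∫ y, (g y - 2 * kk ε) ∂μ = 0 := by
    have hub : ∫ y, (g y - 2 * kk ε) ∂μ ≤ 0 := by
      rw [integral_sub hintg (integrable_const _), integral_const]
      simp only [probReal_univ, one_smul]
      linarith
    exact le_antisymm hub (integral_nonneg hnn)
  have hae : (fun y => g y - 2 * kk ε) =ᵐ[μ] 0 :=
    (integral_eq_zero_iff_of_nonneg hnn (hintg.sub (integrable_const _))).mp hzero
  have hconc : μ ({ptM1 ε s, ptM2 ε s} : Set (Euc 2))ᶜ = 0 := by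
    rw [Filter.EventuallyEq, ae_iff] at hae
    refine measure_mono_null (fun y hy => ?_) hae
    simp only [Set.mem_setOf_eq, Pi.zero_apply]
    intro h0
    have : g y = 2 * kk ε := by linarith
    rcases g_eq hε hs y this with rfl | rfl
    · exact hy (Set.mem_insert _ _)
    · exact hy (Set.mem_insert_of_mem _ rfl)
  -- mass balance
  set t : ℝ := (μ {ptM1 ε s}).toReal with ht
  have htsum : t + (μ {ptM2 ε s}).toReal = 1 := by
    have hms : MeasurableSet ({ptM1 ε s, ptM2 ε s} : Set (Euc 2)) := (Set.toFinite _).measurableSet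
    have h1 : μ ({ptM1 ε s, ptM2 ε s} : Set (Euc 2)) = 1 := by
      have := measure_add_measure_compl (μ := μ) hms
      rwa [hconc, add_zero, measure_univ] at this
    have h2 : μ {ptM1 ε s} + μ {ptM2 ε s} = 1 := by
      rw [← h1, Set.insert_eq, measure_union (Set.disjoint_singleton.mpr hM)
        (measurableSet_singleton _)]
    rw [ht, ← ENNReal.toReal_add (measure_ne_top _ _) (measure_ne_top _ _), h2]
    simp
  -- LP lower bounds force t = 1/2
  have hL1 : kk ε + 2 ≤ 1 / 4 + (3 / 2 + ε / 4) ^ 2 := by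
    rw [kk]; nlinarith [hε.le]
  have hL2 : kk ε + 2 ≤ 9 / 4 + (1 / 2 + 3 * ε / 4) ^ 2 := by
    rw [kk]; nlinarith [hε.le]
  have hw1 : kk ε + 2 * (t - 1 / 2) ≤ W2 rho1 μ ^ 2 ∧
      kk ε + 2 * (1 / 2 - t) ≤ W2 rho1 μ ^ 2 := by
    have key : ∀ γ ∈ Couplings rho1 μ,
        kk ε + 2 * (t - 1 / 2) ≤ ∫ p, ‖p.1 - p.2‖ ^ 2 ∂γ ∧
        kk ε + 2 * (1 / 2 - t) ≤ ∫ p, ‖p.1 - p.2‖ ^ 2 ∂γ := by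
      intro γ hγ
      obtain ⟨pac, pad, pbc, pbd, n1, n2, n3, n4, e1, e2, e3, e4, hi⟩ :=
        coupling_discrete hAB hM hρ1c hconc hγ cost_continuous
      rw [rho1_hp, hp_singleton_fst hAB] at e1
      rw [rho1_hp, hp_singleton_snd hAB] at e2
      have e1' : pac + pad = 1 / 2 := by rw [e1]; simp
      have e2' : pbc + pbd = 1 / 2 := by rw [e2]; simp
      have e3' : pac + pbc = t := e3
      rw [hi, dAM1 hs, dAM2 hs, dBM1 hs, dBM2 hs]
      exact lp_bound hL1 n1 n2 n3 n4 e1' e2' e3'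
    exact ⟨le_W2_sq fun γ hγ => (key γ hγ).1, le_W2_sq fun γ hγ => (key γ hγ).2⟩
  have hw2 : kk ε + 2 * (t - 1 / 2) ≤ W2 (rho2 (s * ε)) μ ^ 2 ∧
      kk ε + 2 * (1 / 2 - t) ≤ W2 (rho2 (s * ε)) μ ^ 2 := by
    have key : ∀ γ ∈ Couplings (rho2 (s * ε)) μ,
        kk ε + 2 * (t - 1 / 2) ≤ ∫ p, ‖p.1 - p.2‖ ^ 2 ∂γ ∧
        kk ε + 2 * (1 / 2 - t) ≤ ∫ p, ‖p.1 - p.2‖ ^ 2 ∂γ := by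
      intro γ hγ
      obtain ⟨pac, pad, pbc, pbd, n1, n2, n3, n4, e1, e2, e3, e4, hi⟩ :=
        coupling_discrete hE hM hρ2c hconc hγ cost_continuous
      rw [rho2_hp hs, hp_singleton_fst hE] at e1
      rw [rho2_hp hs, hp_singleton_snd hE] at e2
      have e1' : pac + pad = 1 / 2 := by rw [e1]; simp
      have e2' : pbc + pbd = 1 / 2 := by rw [e2]; simp
      have e3' : pac + pbc = t := e3
      rw [hi, dE1M1 hs, dE1M2 hs, dE2M1 hs, dE2M2 hs]
      exact lp_bound hL2 n1 n2 n3 n4 e1' e2' e3'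
    exact ⟨le_W2_sq fun γ hγ => (key γ hγ).1, le_W2_sq fun γ hγ => (key γ hγ).2⟩
  have htval : t = 1 / 2 := by
    have h1 := hw1.1
    have h2 := hw2.1
    have h3 := hw1.2
    have h4 := hw2.2
    linarith
  -- conclude
  have hμM1 : μ {ptM1 ε s} = 2⁻¹ := by
    have h1 : (μ {ptM1 ε s}).toReal = ((2 : ℝ≥0∞)⁻¹).toReal := by
      rw [← ht, htval]; simp
    exact (ENNReal.toReal_eq_toReal_iff' (measure_ne_top _ _) (by norm_num)).mp h1
  rw [mustar]
  exact eq_hp_of hM hconc hμM1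

set_option linter.unusedVariables false in
/-- the final theorem -/
theorem no_stability_discrete_example'
    (R : ℝ) (hR : 2 ≤ R) (ε : ℝ) (hε : 0 < ε) (hε' : ε ≤ 1 / 2)
    (μ₁ μ₂ : Measure (Euc 2))
    (h₁ : IsBary (closedBall (0 : Euc 2) R) (Pm ε) μ₁)
    (h₂ : IsBary (closedBall (0 : Euc 2) R) (Pm (-ε)) μ₂) :
    W2 μ₁ μ₂ = 1 ∧ Wc1 (Pm ε) (Pm (-ε)) ≤ ε := by
  constructor
  · -- identify the barycenters
    have h₁' : IsBary (closedBall (0 : Euc 2) R) (Pm ((1 : ℝ) * ε)) μ₁ := by rwa [one_mul]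
    have h₂' : IsBary (closedBall (0 : Euc 2) R) (Pm ((-1 : ℝ) * ε)) μ₂ := by
      rwa [show (-1 : ℝ) * ε = -ε by ring]
    have e₁ : μ₁ = mustar ε 1 := bary_char hR hε hε' (Or.inl rfl) h₁'
    have e₂ : μ₂ = mustar ε (-1) := bary_char hR hε hε' (Or.inr rfl) h₂'
    subst e₁ e₂
    -- the four pairwise distances
    have hM1 : ptM1 ε 1 ≠ ptM2 ε 1 := by
      rw [ptM1, ptM2, Ne, pt_eq_pt_iff]; rintro ⟨-, h2⟩; linarith
    have hM2 : ptM1 ε (-1) ≠ ptM2 ε (-1) := by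
      rw [ptM1, ptM2, Ne, pt_eq_pt_iff]; rintro ⟨-, h2⟩; linarith
    have d11 : ‖ptM1 ε 1 - ptM1 ε (-1)‖ ^ 2 = 1 := by
      rw [ptM1, ptM1, dist_sq_pt]; ring
    have d22 : ‖ptM2 ε 1 - ptM2 ε (-1)‖ ^ 2 = 1 := by
      rw [ptM2, ptM2, dist_sq_pt]; ring
    have d12 : ‖ptM1 ε 1 - ptM2 ε (-1)‖ ^ 2 = (1 + ε / 2) ^ 2 := by
      rw [ptM1, ptM2, dist_sq_pt]; ring
    have d21 : ‖ptM2 ε 1 - ptM1 ε (-1)‖ ^ 2 = (1 + ε / 2) ^ 2 := by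
      rw [ptM2, ptM1, dist_sq_pt]; ring
    -- upper bound
    have hub : W2 (mustar ε 1) (mustar ε (-1)) ≤ 1 := by
      have := W2_le_sqrt (c := 1)
        (hp_pair_mem_couplings (ptM1 ε 1) (ptM1 ε (-1)) (ptM2 ε 1) (ptM2 ε (-1))) ?_
      · rwa [Real.sqrt_one] at this
      · rw [integral_hp_ms]
        show (‖ptM1 ε 1 - ptM1 ε (-1)‖ ^ 2 + ‖ptM2 ε 1 - ptM2 ε (-1)‖ ^ 2) / 2 ≤ 1
        rw [d11, d22]
        norm_num
    -- lower bound
    have hcon1 : (mustar ε 1) ({ptM1 ε 1, ptM2 ε 1} : Set (Euc 2))ᶜ = 0 := by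
      rw [mustar]
      exact hp_compl_zero (Set.toFinite _).measurableSet (Set.mem_insert _ _)
        (Set.mem_insert_of_mem _ rfl)
    have hcon2 : (mustar ε (-1)) ({ptM1 ε (-1), ptM2 ε (-1)} : Set (Euc 2))ᶜ = 0 := by
      rw [mustar]
      exact hp_compl_zero (Set.toFinite _).measurableSet (Set.mem_insert _ _)
        (Set.mem_insert_of_mem _ rfl)
    have hlb : 1 ≤ W2 (mustar ε 1) (mustar ε (-1)) ^ 2 := by
      refine le_W2_sq fun γ hγ => ?_
      obtain ⟨pac, pad, pbc, pbd, n1, n2, n3, n4, e1, e2, e3, e4, hi⟩ :=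
        coupling_discrete hM1 hM2 hcon1 hcon2 hγ cost_continuous
      rw [mustar, hp_singleton_fst hM1] at e1
      rw [mustar, hp_singleton_snd hM1] at e2
      have e1' : pac + pad = 1 / 2 := by rw [e1]; simp
      have e2' : pbc + pbd = 1 / 2 := by rw [e2]; simp
      rw [hi, d11, d12, d21, d22]
      nlinarith [mul_nonneg (by linarith : (0:ℝ) ≤ pad + pbc)
        (by nlinarith : (0:ℝ) ≤ (1 + ε / 2) ^ 2 - 1)]
    have h0 : 0 ≤ W2 (mustar ε 1) (mustar ε (-1)) := W2_nonneg _ _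
    nlinarith [hub, hlb, h0]
  · -- the Wasserstein-1 comparison of the two models
    set γ0 : Measure (Measure (Euc 2) × Measure (Euc 2)) :=
      hp (rho1, rho1) (rho2 ε, rho2 (-ε)) with hγ0
    have hmem : γ0 ∈ Couplings (Pm ε) (Pm (-ε)) := by
      rw [hγ0, Pm_eq, Pm_eq]
      exact hp_pair_mem_couplings rho1 rho1 (rho2 ε) (rho2 (-ε))
    have hms1 : MeasurableSet ({(rho1, rho1)} : Set (Measure (Euc 2) × Measure (Euc 2))) := by
      rw [← Set.singleton_prod_singleton]
      exact (measurableSet_singleton_measure rho1).prod (measurableSet_singleton_measure rho1)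
    have hms2 : MeasurableSet ({(rho2 ε, rho2 (-ε))} : Set (Measure (Euc 2) × Measure (Euc 2))) := by
      rw [← Set.singleton_prod_singleton]
      exact (measurableSet_singleton_measure (rho2 ε)).prod
        (measurableSet_singleton_measure (rho2 (-ε)))
    have hval : ∫ p, W2 p.1 p.2 ∂γ0 = (W2 rho1 rho1 + W2 (rho2 ε) (rho2 (-ε))) / 2 := by
      rw [hγ0, integral_hp hms1 hms2]
    -- W2 rho1 rho1 = 0
    have hW11 : W2 rho1 rho1 = 0 := by
      refine le_antisymm ?_ (W2_nonneg _ _)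
      have hcoup : hp (ptA, ptA) (ptB, ptB) ∈ Couplings rho1 rho1 := by
        rw [rho1_hp]
        exact hp_pair_mem_couplings ptA ptA ptB ptB
      have := W2_le_sqrt (c := 0) hcoup ?_
      · rwa [Real.sqrt_zero] at this
      · rw [integral_hp_ms]
        show (‖ptA - ptA‖ ^ 2 + ‖ptB - ptB‖ ^ 2) / 2 ≤ 0
        simp
    -- W2 (rho2 ε) (rho2 (-ε)) ≤ ε
    have hW22 : W2 (rho2 ε) (rho2 (-ε)) ≤ ε := by
      have hr2 : rho2 (-ε) = hp (pt 1 (-(ε / 2))) (pt (-1) (ε / 2)) := by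
        rw [rho2_eq]
        congr 1
        · exact congrArg (pt 1) (by ring)
        · exact congrArg (pt (-1)) (by ring)
      have hcoup : hp (pt 1 (ε / 2), pt 1 (-(ε / 2))) (pt (-1) (-(ε / 2)), pt (-1) (ε / 2)) ∈
          Couplings (rho2 ε) (rho2 (-ε)) := by
        rw [rho2_eq, hr2]
        exact hp_pair_mem_couplings _ _ _ _
      have hv := W2_le_sqrt (c := ε ^ 2) hcoup ?_
      · rwa [Real.sqrt_sq hε.le] at hv
      · rw [integral_hp_ms]
        show (‖pt 1 (ε / 2) - pt 1 (-(ε / 2))‖ ^ 2 + ‖pt (-1) (-(ε / 2)) - pt (-1) (ε / 2)‖ ^ 2) / 2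
          ≤ ε ^ 2
        rw [dist_sq_pt, dist_sq_pt]
        ring_nf
        nlinarith [sq_nonneg ε]
    -- conclude
    have hbdd : BddBelow ((fun γ : Measure (Measure (Euc 2) × Measure (Euc 2)) =>
        ∫ p, W2 p.1 p.2 ∂γ) '' Couplings (Pm ε) (Pm (-ε))) := by
      refine ⟨0, ?_⟩
      rintro x ⟨γ, -, rfl⟩
      exact integral_nonneg fun p => W2_nonneg _ _
    refine le_trans (csInf_le hbdd ⟨γ0, hmem, rfl⟩) ?_
    show ∫ p, W2 p.1 p.2 ∂γ0 ≤ ε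
    rw [hval, hW11]
    linarith


/-- **No quantitative stability without regularity (Figure 1).**
For `0 < ε ≤ ½`, any barycenters of `P_ε` and `P_{-ε}` are at `W₂`-distance
exactly `1`, although `𝒲₁(P_ε, P_{-ε}) ≤ ε`. -/
theorem no_stability_discrete_example
    (R : ℝ) (hR : 2 ≤ R) (ε : ℝ) (hε : 0 < ε) (hε' : ε ≤ 1 / 2)
    (μ₁ μ₂ : Measure (Euc 2))
    (h₁ : IsBary (closedBall (0 : Euc 2) R) (Pm ε) μ₁)
    (h₂ : IsBary (closedBall (0 : Euc 2) R) (Pm (-ε)) μ₂) :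
    W2 μ₁ μ₂ = 1 ∧ Wc1 (Pm ε) (Pm (-ε)) ≤ ε :=
  no_stability_discrete_example' R hR ε hε hε' μ₁ μ₂ h₁ h₂
end
end

section
/- Let Ω = B(0,R) ⊂ ℝ^d. Let P, Q ∈ P(P(Ω)), let μ_P be a minimizer of F_P and μ_Q a minimizer of F_Q. Assume F_P satisfies the strong convexity estimate at μ_P: α · W₂⁶(μ_P, ν) ≤ C · (F_P(ν) − F_P(μ_P)) for all ν ∈ P(Ω) (with constants α, C > 0, as holds under Assumption (A) via the dual optimal potentials). Then α · W₂⁶(μ_P, μ_Q) ≤ C · ⟨ ½(W₂²(·, μ_Q) − W₂²(·, μ_P)), P − Q ⟩, where ⟨g, P − Q⟩ = ∫g dP − ∫g dQ for g : P(Ω) → ℝ. -/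
noncomputable section

open MeasureTheory Metric Set
open scoped ENNReal NNReal RealInnerProductSpace

namespace W2Aux

variable {d : ℕ}

/-- The quadratic cost of a plan. -/
def costI (γ : Measure (Euc d × Euc d)) : ℝ := ∫ p, ‖p.1 - p.2‖ ^ 2 ∂γ

/-- The minimal cost. -/
def mc (ρ μ : Measure (Euc d)) : ℝ := sInf (costI '' Couplings ρ μ)

lemma W2_eq_sqrt_mc (ρ μ : Measure (Euc d)) : W2 ρ μ = Real.sqrt (mc ρ μ) := rfl

lemma costI_nonneg (γ : Measure (Euc d × Euc d)) : 0 ≤ costI γ :=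
  integral_nonneg fun p => by positivity

lemma mc_nonneg (ρ μ : Measure (Euc d)) : 0 ≤ mc ρ μ := by
  apply Real.sInf_nonneg
  rintro x ⟨γ, -, rfl⟩; exact costI_nonneg γ

lemma W2_sq (ρ μ : Measure (Euc d)) : W2 ρ μ ^ 2 = mc ρ μ :=
  Real.sq_sqrt (mc_nonneg ρ μ)

lemma W2_nonneg (ρ μ : Measure (Euc d)) : 0 ≤ W2 ρ μ := Real.sqrt_nonneg _

lemma costFn_stronglyMeasurable :
    StronglyMeasurable (fun p : Euc d × Euc d => ‖p.1 - p.2‖ ^ 2) :=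
  (((continuous_fst.sub continuous_snd).norm).pow 2).stronglyMeasurable

/-- membership facts of couplings -/
lemma coupling_univ {ρ μ : Measure (Euc d)} {γ : Measure (Euc d × Euc d)}
    (h : γ ∈ Couplings ρ μ) : γ univ = ρ univ := by
  rw [← h.1, Measure.map_apply measurable_fst MeasurableSet.univ, preimage_univ]

lemma coupling_isProb {ρ μ : Measure (Euc d)} {γ : Measure (Euc d × Euc d)}
    (hρ : IsProbabilityMeasure ρ) (h : γ ∈ Couplings ρ μ) : IsProbabilityMeasure γ :=
  ⟨by rw [coupling_univ h, hρ.measure_univ]⟩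

lemma coupling_null_fst {ρ μ : Measure (Euc d)} {γ : Measure (Euc d × Euc d)}
    (h : γ ∈ Couplings ρ μ) {A : Set (Euc d)} (hA : MeasurableSet A) (h0 : ρ Aᶜ = 0) :
    γ {p | p.1 ∉ A} = 0 := by
  have : γ (Prod.fst ⁻¹' Aᶜ) = 0 := by
    rw [← Measure.map_apply measurable_fst hA.compl, h.1]; exact h0
  exact this

lemma coupling_null_snd {ρ μ : Measure (Euc d)} {γ : Measure (Euc d × Euc d)}
    (h : γ ∈ Couplings ρ μ) {A : Set (Euc d)} (hA : MeasurableSet A) (h0 : μ Aᶜ = 0) :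
    γ {p | p.2 ∉ A} = 0 := by
  have : γ (Prod.snd ⁻¹' Aᶜ) = 0 := by
    rw [← Measure.map_apply measurable_snd hA.compl, h.2]; exact h0
  exact this

variable {R : ℝ}

/-- key a.e. membership -/
lemma coupling_ae_memK {ρ μ : Measure (Euc d)} {γ : Measure (Euc d × Euc d)}
    (h : γ ∈ Couplings ρ μ) (hρ : ρ (closedBall (0 : Euc d) R)ᶜ = 0)
    (hμ : μ (closedBall (0 : Euc d) R)ᶜ = 0) :
    ∀ᵐ p ∂γ, p.1 ∈ closedBall (0 : Euc d) R ∧ p.2 ∈ closedBall (0 : Euc d) R := by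
  have h1 := coupling_null_fst h measurableSet_closedBall hρ
  have h2 := coupling_null_snd h measurableSet_closedBall hμ
  have g1 : ∀ᵐ p ∂γ, p.1 ∈ closedBall (0 : Euc d) R := by
    rw [ae_iff]; exact h1
  have g2 : ∀ᵐ p ∂γ, p.2 ∈ closedBall (0 : Euc d) R := by
    rw [ae_iff]; exact h2
  exact g1.and g2

lemma norm_sub_le_of_memK {x y : Euc d} (hx : x ∈ closedBall (0 : Euc d) R)
    (hy : y ∈ closedBall (0 : Euc d) R) : ‖x - y‖ ≤ 2 * R := by
  rw [mem_closedBall, dist_eq_norm, sub_zero] at hx hy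
  calc ‖x - y‖ ≤ ‖x‖ + ‖y‖ := norm_sub_le x y
  _ ≤ 2 * R := by linarith

/-- generic cost bound -/
lemma cost_bound (γ : Measure (Euc d × Euc d)) [IsFiniteMeasure γ] {M : ℝ} (hM : 0 ≤ M)
    (h : ∀ᵐ p ∂γ, ‖p.1 - p.2‖ ^ 2 ≤ M) :
    Integrable (fun p : Euc d × Euc d => ‖p.1 - p.2‖ ^ 2) γ ∧
      costI γ ≤ M * (γ univ).toReal := by
  have hint : Integrable (fun p : Euc d × Euc d => ‖p.1 - p.2‖ ^ 2) γ := by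
    refine Integrable.mono' (integrable_const M) costFn_stronglyMeasurable.aestronglyMeasurable ?_
    filter_upwards [h] with p hp
    rwa [Real.norm_of_nonneg (by positivity)]
  refine ⟨hint, ?_⟩
  calc costI γ ≤ ∫ _, M ∂γ := integral_mono_ae hint (integrable_const M) h
  _ = M * (γ univ).toReal := by simp [mul_comm, measureReal_def]




variable {d : ℕ} {R : ℝ}

lemma prod_mem_couplings {ρ μ : Measure (Euc d)} (hρ : IsProbabilityMeasure ρ)
    (hμ : IsProbabilityMeasure μ) : ρ.prod μ ∈ Couplings ρ μ := by
  constructor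
  · rw [Measure.map_fst_prod]; simp
  · rw [Measure.map_snd_prod]; simp

lemma mc_le_costI {ρ μ : Measure (Euc d)} {γ : Measure (Euc d × Euc d)}
    (h : γ ∈ Couplings ρ μ) : mc ρ μ ≤ costI γ := by
  refine csInf_le ⟨0, ?_⟩ ⟨γ, h, rfl⟩
  rintro x ⟨γ', -, rfl⟩; exact costI_nonneg γ'

/-- cost bound for couplings of measures on the ball -/
lemma coupling_cost_le {ρ μ : Measure (Euc d)} {γ : Measure (Euc d × Euc d)}
    (hR : 0 ≤ R)
    (hρ : ProbOn (closedBall (0 : Euc d) R) ρ) (hμ : ProbOn (closedBall (0 : Euc d) R) μ)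
    (h : γ ∈ Couplings ρ μ) :
    Integrable (fun p : Euc d × Euc d => ‖p.1 - p.2‖ ^ 2) γ ∧ costI γ ≤ (2 * R) ^ 2 := by
  haveI := coupling_isProb hρ.1 h
  have hae : ∀ᵐ p ∂γ, ‖p.1 - p.2‖ ^ 2 ≤ (2 * R) ^ 2 := by
    filter_upwards [coupling_ae_memK h hρ.2 hμ.2] with p hp
    exact pow_le_pow_left₀ (norm_nonneg _) (norm_sub_le_of_memK hp.1 hp.2) 2
  obtain ⟨h1, h2⟩ := cost_bound γ (by positivity) hae
  exact ⟨h1, by simpa using h2⟩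

lemma mc_le_4R2 {ρ μ : Measure (Euc d)} (hR : 0 ≤ R)
    (hρ : ProbOn (closedBall (0 : Euc d) R) ρ) (hμ : ProbOn (closedBall (0 : Euc d) R) μ) :
    mc ρ μ ≤ (2 * R) ^ 2 := by
  haveI := hρ.1; haveI := hμ.1
  exact le_trans (mc_le_costI (prod_mem_couplings hρ.1 hμ.1))
    (coupling_cost_le hR hρ hμ (prod_mem_couplings hρ.1 hμ.1)).2

/-- normalized restriction -/
def nmz (ρ : Measure (Euc d)) (s : Set (Euc d)) : Measure (Euc d) :=
  (ρ s)⁻¹ • ρ.restrict s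

lemma nmz_of_zero {ρ : Measure (Euc d)} {s : Set (Euc d)} (h : ρ s = 0) : nmz ρ s = 0 := by
  rw [nmz, Measure.restrict_eq_zero.2 h, smul_zero]

lemma smul_nmz {ρ : Measure (Euc d)} {s : Set (Euc d)} (hfin : ρ s ≠ ∞) :
    ρ s • nmz ρ s = ρ.restrict s := by
  by_cases h0 : ρ s = 0
  · rw [nmz_of_zero h0, smul_zero, Measure.restrict_eq_zero.2 h0]
  · rw [nmz, smul_smul, ENNReal.mul_inv_cancel h0 hfin, one_smul]

lemma nmz_univ {ρ : Measure (Euc d)} {s : Set (Euc d)} (h0 : ρ s ≠ 0) (hfin : ρ s ≠ ∞) :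
    nmz ρ s univ = 1 := by
  rw [nmz, Measure.smul_apply, Measure.restrict_apply_univ, smul_eq_mul,
    ENNReal.inv_mul_cancel h0 hfin]

lemma nmz_univ_le {ρ : Measure (Euc d)} {s : Set (Euc d)} (hfin : ρ s ≠ ∞) :
    nmz ρ s univ ≤ 1 := by
  by_cases h0 : ρ s = 0
  · rw [nmz_of_zero h0]; simp
  · rw [nmz_univ h0 hfin]

lemma nmz_isFinite {ρ : Measure (Euc d)} {s : Set (Euc d)} (hfin : ρ s ≠ ∞) :
    IsFiniteMeasure (nmz ρ s) :=
  ⟨lt_of_le_of_lt (nmz_univ_le hfin) ENNReal.one_lt_top⟩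

lemma nmz_null {ρ : Measure (Euc d)} {s A : Set (Euc d)} (hs : MeasurableSet s)
    (hA : MeasurableSet A) (h : ρ Aᶜ = 0) : nmz ρ s ((s ∩ A)ᶜ) = 0 := by
  rw [nmz, Measure.smul_apply, Measure.restrict_apply (hs.inter hA).compl]
  have : (s ∩ A)ᶜ ∩ s ⊆ Aᶜ := by
    intro x hx
    rcases hx with ⟨hx1, hx2⟩
    simp only [mem_compl_iff, mem_inter_iff, not_and] at hx1 ⊢
    exact hx1 hx2
  rw [measure_mono_null this h, smul_zero]

/-- reconstruct a measure from a measurable partition -/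
lemma sum_smul_nmz {ρ : Measure (Euc d)} [IsFiniteMeasure ρ] {m : ℕ}
    {cell : Fin m → Set (Euc d)} (hmeas : ∀ i, MeasurableSet (cell i))
    (hdisj : Pairwise (Function.onFun Disjoint cell)) (hcover : (⋃ i, cell i) = univ) :
    (∑ i, ρ (cell i) • nmz ρ (cell i)) = ρ := by
  calc (∑ i, ρ (cell i) • nmz ρ (cell i)) = ∑ i, ρ.restrict (cell i) :=
        Finset.sum_congr rfl (fun i _ => smul_nmz (measure_ne_top ρ _))
  _ = ρ := by
      rw [← Measure.sum_fintype, ← Measure.restrict_iUnion hdisj hmeas, hcover,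
        Measure.restrict_univ]



open scoped Classical

lemma exists_partition {d : ℕ} {R : ℝ} (hR : 0 ≤ R) {ε : ℝ} (hε : 0 < ε) :
    ∃ (m : ℕ) (c : Fin m → Euc d) (cell : Fin m → Set (Euc d)),
      (∀ i, MeasurableSet (cell i)) ∧ Pairwise (Function.onFun Disjoint cell) ∧
      (⋃ i, cell i) = univ ∧ (∀ i, c i ∈ closedBall (0 : Euc d) R) ∧
      (∀ i, ∀ x ∈ cell i ∩ closedBall (0 : Euc d) R, ‖x - c i‖ ≤ ε) := by
  set K := closedBall (0 : Euc d) R with hK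
  have hcomp : IsCompact K := isCompact_closedBall _ _
  have hcov : K ⊆ ⋃ x : K, ball (x : Euc d) ε := fun x hx =>
    mem_iUnion.2 ⟨⟨x, hx⟩, mem_ball_self hε⟩
  obtain ⟨t, ht⟩ := hcomp.elim_finite_subcover (fun x : K => ball (x : Euc d) ε)
    (fun _ => isOpen_ball) hcov
  set k := t.card with hk
  set e := t.equivFin with he
  set pts : ℕ → Euc d := fun n => if h : n < k then ((e.symm ⟨n, h⟩ : K) : Euc d) else 0
    with hpts
  set g : ℕ → Set (Euc d) := fun n =>
    if n < k then ball (pts n) ε else (⋃ j : Fin k, ball (pts j) ε)ᶜ with hg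
  have hgmeas : ∀ n, MeasurableSet (g n) := by
    intro n
    by_cases h : n < k <;> simp only [hg, h, if_true, if_false]
    · exact measurableSet_ball
    · exact (MeasurableSet.iUnion (fun j => measurableSet_ball)).compl
  -- K is covered by the Fin k indexed balls
  have hKcov : K ⊆ ⋃ j : Fin k, ball (pts j) ε := by
    intro x hx
    obtain ⟨y, hy⟩ := mem_iUnion.1 (ht hx)
    simp only [mem_iUnion, exists_prop] at hy
    obtain ⟨hyt, hxy⟩ := hy
    refine mem_iUnion.2 ⟨e ⟨y, hyt⟩, ?_⟩
    have : pts (e ⟨y, hyt⟩) = (y : Euc d) := by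
      simp only [hpts]
      have hlt : ((e ⟨y, hyt⟩ : Fin k) : ℕ) < k := (e ⟨y, hyt⟩).isLt
      rw [dif_pos hlt]
      congr 1
      have : (⟨((e ⟨y, hyt⟩ : Fin k) : ℕ), hlt⟩ : Fin k) = e ⟨y, hyt⟩ := by
        ext; rfl
      rw [this, Equiv.symm_apply_apply]
    rwa [this]
  -- the union of all g's is everything
  have hgU : (⋃ n, g n) = univ := by
    rw [eq_univ_iff_forall]
    intro x
    by_cases hx : x ∈ ⋃ j : Fin k, ball (pts j) ε
    · obtain ⟨j, hj⟩ := mem_iUnion.1 hx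
      exact mem_iUnion.2 ⟨j, by simp only [hg, j.isLt, if_true]; exact hj⟩
    · refine mem_iUnion.2 ⟨k, ?_⟩
      simp only [hg, lt_irrefl, if_false]
      exact hx
  -- disjointed g n is empty for n > k
  have hgtail : ∀ n, k + 1 ≤ n → disjointed g n = ∅ := by
    intro n hn
    obtain ⟨j, rfl⟩ : ∃ j, n = j + 1 := ⟨n - 1, by omega⟩
    have hjk : k ≤ j := by omega
    have h1 : disjointed g (j + 1) = g (j + 1) \ partialSups g j := by
      simpa only [Order.succ_eq_add_one] using disjointed_succ g (not_isMax j)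
    have h2 : g k ≤ partialSups g j := le_partialSups_of_le g hjk
    have h3 : g (j + 1) = g k := by
      simp only [hg, if_neg (by omega : ¬ j + 1 < k), if_neg (by omega : ¬ k < k)]
    rw [h1, h3]
    exact eq_empty_of_subset_empty (by intro x hx; exact hx.2 (h2 hx.1))
  refine ⟨k + 1, fun i => pts i.val, fun i => disjointed g i.val,
    fun i => MeasurableSet.disjointed hgmeas _,
    fun i j hij => disjoint_disjointed g (Fin.val_injective.ne hij), ?_, ?_, ?_⟩
  · rw [eq_univ_iff_forall]
    intro x
    have : x ∈ ⋃ n, disjointed g n := by rw [iUnion_disjointed, hgU]; trivial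
    obtain ⟨n, hn⟩ := mem_iUnion.1 this
    have hnk : n < k + 1 := by
      by_contra h
      rw [hgtail n (by omega)] at hn
      exact hn
    exact mem_iUnion.2 ⟨⟨n, hnk⟩, hn⟩
  · intro i
    simp only [hpts]
    by_cases h : (i : ℕ) < k
    · rw [dif_pos h]; exact ((e.symm ⟨i, h⟩ : K)).2
    · rw [dif_neg h]; exact mem_closedBall_self hR
  · intro i x hx
    have hxg : x ∈ g i.val := disjointed_subset g i.val hx.1
    by_cases h : (i : ℕ) < k
    · simp only [hg, if_pos h] at hxg
      rw [← dist_eq_norm]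
      exact le_of_lt hxg
    · simp only [hg, if_neg h] at hxg
      exact absurd (hKcov hx.2) hxg


lemma map_finset_sum {X Y : Type*} [MeasurableSpace X] [MeasurableSpace Y]
    {ι : Type*} (s : Finset ι) (μs : ι → Measure X) {f : X → Y} (hf : Measurable f) :
    (∑ i ∈ s, μs i).map f = ∑ i ∈ s, (μs i).map f := by
  induction s using Finset.cons_induction with
  | empty => simp
  | cons a s ha ih => rw [Finset.sum_cons, Finset.sum_cons, Measure.map_add _ _ hf, ih]

lemma sum_tsub' {ι : Type*} (s : Finset ι) {a b : ι → ℝ≥0∞}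
    (hle : ∀ i ∈ s, b i ≤ a i) (hfin : ∀ i ∈ s, a i ≠ ∞) :
    ∑ i ∈ s, (a i - b i) = ∑ i ∈ s, a i - ∑ i ∈ s, b i := by
  have hbfin : ∑ i ∈ s, b i ≠ ∞ := by
    refine (ENNReal.sum_lt_top.2 fun i hi => ?_).ne
    exact lt_of_le_of_lt (hle i hi) (lt_top_iff_ne_top.2 (hfin i hi))
  refine ENNReal.eq_sub_of_add_eq hbfin ?_
  rw [← Finset.sum_add_distrib]
  exact Finset.sum_congr rfl fun i hi => tsub_add_cancel_of_le (hle i hi)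

lemma prod_null_compl {d : ℕ} (a b : Measure (Euc d)) [SFinite a] [SFinite b]
    {A B : Set (Euc d)} (ha : a Aᶜ = 0) (hb : b Bᶜ = 0) :
    (a.prod b) ((A ×ˢ B)ᶜ) = 0 := by
  have hsub : (A ×ˢ B)ᶜ ⊆ (Aᶜ ×ˢ univ) ∪ (univ ×ˢ Bᶜ) := by
    intro p hp
    simp only [mem_compl_iff, mem_prod, not_and] at hp
    by_cases h1 : p.1 ∈ A
    · exact Or.inr ⟨trivial, hp h1⟩
    · exact Or.inl ⟨h1, trivial⟩
  refine le_antisymm (le_trans (measure_mono hsub) ?_) zero_le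
  refine le_trans (measure_union_le _ _) ?_
  rw [Measure.prod_prod, Measure.prod_prod, ha, hb]
  simp

lemma sum_cells {d : ℕ} (ρ : Measure (Euc d)) [IsProbabilityMeasure ρ] {m : ℕ}
    {cell : Fin m → Set (Euc d)} (hmeas : ∀ i, MeasurableSet (cell i))
    (hdisj : Pairwise (Function.onFun Disjoint cell)) (hcover : (⋃ i, cell i) = univ) :
    ∑ i, ρ (cell i) = 1 := by
  rw [← measure_univ (μ := ρ), ← hcover, measure_iUnion hdisj hmeas, tsum_fintype]

/-- Feasibility of a rational matrix against column bounds `w`. -/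
def Feas {m : ℕ} (w : Fin m → ℝ) (q : Fin m → Fin m → ℚ) : Prop :=
  (∀ i j, 0 ≤ q i j) ∧ (∀ j, (∑ i, ((q i j : ℝ))) ≤ w j) ∧ (∑ i, ∑ j, ((q i j : ℝ))) ≤ 1

def rowOK {d : ℕ} {m : ℕ} (cell : Fin m → Set (Euc d)) (q : Fin m → Fin m → ℚ)
    (ρ : Measure (Euc d)) : Prop :=
  ∀ i, (∑ j, ((q i j : ℝ))) ≤ (ρ (cell i)).toReal

def val {d : ℕ} {m : ℕ} (c : Fin m → Euc d) (R ε : ℝ) (q : Fin m → Fin m → ℚ) : ℝ :=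
  (∑ i, ∑ j, (q i j : ℝ) * (‖c i - c j‖ + 2 * ε) ^ 2) +
    (2 * R + 2 * ε) ^ 2 * (1 - ∑ i, ∑ j, (q i j : ℝ))

def Gfun {d : ℕ} {m : ℕ} (R ε : ℝ) (c : Fin m → Euc d) (cell : Fin m → Set (Euc d))
    (μ : Measure (Euc d)) : Measure (Euc d) → ℝ≥0∞ := fun ρ =>
  ⨅ q : Fin m → Fin m → ℚ,
    if Feas (fun j => (μ (cell j)).toReal) q ∧ rowOK cell q ρ then
      ENNReal.ofReal (val c R ε q) else ⊤

lemma measurable_Gfun {d : ℕ} {m : ℕ} (R ε : ℝ) (c : Fin m → Euc d)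
    (cell : Fin m → Set (Euc d)) (hmeas : ∀ i, MeasurableSet (cell i))
    (μ : Measure (Euc d)) : Measurable (Gfun R ε c cell μ) := by
  refine Measurable.iInf fun q => ?_
  by_cases hF : Feas (fun j => (μ (cell j)).toReal) q
  · have : (fun ρ => if Feas (fun j => (μ (cell j)).toReal) q ∧ rowOK cell q ρ then
        ENNReal.ofReal (val c R ε q) else (⊤ : ℝ≥0∞)) =
        (fun ρ => if rowOK cell q ρ then ENNReal.ofReal (val c R ε q) else ⊤) := by
      funext ρ; by_cases hr : rowOK cell q ρ <;> simp [hF, hr]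
    rw [this]
    have hset : MeasurableSet {ρ : Measure (Euc d) | rowOK cell q ρ} := by
      have : {ρ : Measure (Euc d) | rowOK cell q ρ} =
          ⋂ i, {ρ : Measure (Euc d) | (∑ j, ((q i j : ℝ))) ≤ (ρ (cell i)).toReal} := by
        ext ρ; simp [rowOK, mem_iInter]
      rw [this]
      refine MeasurableSet.iInter fun i => ?_
      exact measurableSet_le measurable_const
        ((Measure.measurable_coe (hmeas i)).ennreal_toReal)
    exact Measurable.ite hset measurable_const measurable_const
  · have : (fun ρ => if Feas (fun j => (μ (cell j)).toReal) q ∧ rowOK cell q ρ then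
        ENNReal.ofReal (val c R ε q) else (⊤ : ℝ≥0∞)) = fun _ => (⊤ : ℝ≥0∞) := by
      funext ρ; simp [hF]
    rw [this]; exact measurable_const


end W2Aux

namespace W2Aux

set_option maxHeartbeats 2000000 in
/-- **Claim A**: every feasible rational matrix gives an upper bound on the minimal cost. -/
lemma mc_le_val {d m : ℕ} {R ε : ℝ} (hR : 0 ≤ R) (hε : 0 < ε)
    {c : Fin m → Euc d} {cell : Fin m → Set (Euc d)}
    (hmeas : ∀ i, MeasurableSet (cell i)) (hdisj : Pairwise (Function.onFun Disjoint cell))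
    (hcover : (⋃ i, cell i) = univ)
    (hclose : ∀ i, ∀ x ∈ cell i ∩ closedBall (0 : Euc d) R, ‖x - c i‖ ≤ ε)
    {ρ μ : Measure (Euc d)} (hρ : ProbOn (closedBall (0 : Euc d) R) ρ)
    (hμ : ProbOn (closedBall (0 : Euc d) R) μ)
    {q : Fin m → Fin m → ℚ} (hF : Feas (fun j => (μ (cell j)).toReal) q)
    (hrow : rowOK cell q ρ) :
    mc ρ μ ≤ val c R ε q := by
  haveI := hρ.1; haveI := hμ.1
  obtain ⟨hq0, hcol, htot⟩ := hF
  set K := closedBall (0 : Euc d) R with hKdef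
  have hq0' : ∀ i j, (0:ℝ) ≤ (q i j : ℝ) := fun i j => by exact_mod_cast hq0 i j
  set qq : Fin m → Fin m → ℝ≥0∞ := fun i j => ENNReal.ofReal (q i j : ℝ) with hqq
  have hqq_fin : ∀ i j, qq i j ≠ ∞ := fun i j => ENNReal.ofReal_ne_top
  have hqq_toReal : ∀ i j, (qq i j).toReal = (q i j : ℝ) :=
    fun i j => ENNReal.toReal_ofReal (hq0' i j)
  set nr : Fin m → Measure (Euc d) := fun i => nmz ρ (cell i) with hnr
  set nm : Fin m → Measure (Euc d) := fun j => nmz μ (cell j) with hnm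
  have hnrF : ∀ i, IsFiniteMeasure (nr i) := fun i => nmz_isFinite (measure_ne_top ρ _)
  have hnmF : ∀ j, IsFiniteMeasure (nm j) := fun j => nmz_isFinite (measure_ne_top μ _)
  set rowq : Fin m → ℝ≥0∞ := fun i => ∑ j, qq i j with hrowq
  set colq : Fin m → ℝ≥0∞ := fun j => ∑ i, qq i j with hcolq
  set sq : ℝ≥0∞ := ∑ i, ∑ j, qq i j with hsq
  have hrowq_eq : ∀ i, rowq i = ENNReal.ofReal (∑ j, (q i j : ℝ)) := fun i => by
    rw [hrowq, ENNReal.ofReal_sum_of_nonneg (fun j _ => hq0' i j)]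
  have hcolq_eq : ∀ j, colq j = ENNReal.ofReal (∑ i, (q i j : ℝ)) := fun j => by
    rw [hcolq, ENNReal.ofReal_sum_of_nonneg (fun i _ => hq0' i j)]
  have hrow_le : ∀ i, rowq i ≤ ρ (cell i) := fun i => by
    rw [hrowq_eq i, ← ENNReal.ofReal_toReal (measure_ne_top ρ (cell i))]
    exact ENNReal.ofReal_le_ofReal (hrow i)
  have hcol_le : ∀ j, colq j ≤ μ (cell j) := fun j => by
    rw [hcolq_eq j, ← ENNReal.ofReal_toReal (measure_ne_top μ (cell j))]
    exact ENNReal.ofReal_le_ofReal (hcol j)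
  have hsq_eq : sq = ENNReal.ofReal (∑ i, ∑ j, (q i j : ℝ)) := by
    rw [hsq, ENNReal.ofReal_sum_of_nonneg
      (fun i _ => Finset.sum_nonneg (fun j _ => hq0' i j))]
    exact Finset.sum_congr rfl fun i _ =>
      (ENNReal.ofReal_sum_of_nonneg (fun j _ => hq0' i j)).symm
  have hSq_nonneg : (0:ℝ) ≤ ∑ i, ∑ j, (q i j : ℝ) :=
    Finset.sum_nonneg fun i _ => Finset.sum_nonneg fun j _ => hq0' i j
  have hsq_le : sq ≤ 1 := by
    rw [hsq_eq]
    calc ENNReal.ofReal (∑ i, ∑ j, (q i j : ℝ)) ≤ ENNReal.ofReal 1 :=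
        ENNReal.ofReal_le_ofReal htot
    _ = 1 := ENNReal.ofReal_one
  have hsq_toReal : sq.toReal = ∑ i, ∑ j, (q i j : ℝ) := by
    rw [hsq_eq, ENNReal.toReal_ofReal hSq_nonneg]
  have hq_zero_row : ∀ i, ρ (cell i) = 0 → ∀ j, qq i j = 0 := by
    intro i h0 j
    have h1 : (∑ j, (q i j : ℝ)) ≤ 0 := by
      simpa [rowOK, h0] using hrow i
    have h2 : (q i j : ℝ) = 0 := le_antisymm
      (le_trans (Finset.single_le_sum (fun j _ => hq0' i j) (Finset.mem_univ j)) h1)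
      (hq0' i j)
    simp [hqq, h2]
  have hq_zero_col : ∀ j, μ (cell j) = 0 → ∀ i, qq i j = 0 := by
    intro j h0 i
    have h1 : (∑ i, (q i j : ℝ)) ≤ 0 := by
      simpa [h0] using hcol j
    have h2 : (q i j : ℝ) = 0 := le_antisymm
      (le_trans (Finset.single_le_sum (fun i _ => hq0' i j) (Finset.mem_univ i)) h1)
      (hq0' i j)
    simp [hqq, h2]
  have hnr_univ : ∀ i, ρ (cell i) ≠ 0 → nr i univ = 1 :=
    fun i h => nmz_univ h (measure_ne_top ρ _)
  have hnm_univ : ∀ j, μ (cell j) ≠ 0 → nm j univ = 1 :=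
    fun j h => nmz_univ h (measure_ne_top μ _)
  set pr : Fin m → Fin m → Measure (Euc d × Euc d) := fun i j => (nr i).prod (nm j) with hpr
  set A : Measure (Euc d × Euc d) := ∑ i, ∑ j, qq i j • pr i j with hA
  set ρ' : Measure (Euc d) := ∑ i, (ρ (cell i) - rowq i) • nr i with hρ'
  set μ' : Measure (Euc d) := ∑ j, (μ (cell j) - colq j) • nm j with hμ'
  set srem : ℝ≥0∞ := 1 - sq with hsrem
  have hsrem_fin : srem ≠ ∞ := (lt_of_le_of_lt tsub_le_self (by simp)).ne
  set B : Measure (Euc d × Euc d) := srem⁻¹ • (ρ'.prod μ') with hB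
  set γ := A + B with hγ
  -- univ masses
  have hρ'_univ : ρ' univ = srem := by
    have h1 : ρ' univ = ∑ i, (ρ (cell i) - rowq i) * (nr i univ) := by
      rw [hρ', Measure.finset_sum_apply]
      exact Finset.sum_congr rfl fun i _ => by rw [Measure.smul_apply, smul_eq_mul]
    rw [h1]
    have h2 : ∀ i ∈ Finset.univ, (ρ (cell i) - rowq i) * (nr i univ) =
        ρ (cell i) - rowq i := by
      intro i _
      by_cases h0 : ρ (cell i) = 0
      · have : rowq i = 0 := le_antisymm (h0 ▸ hrow_le i) zero_le
        rw [h0, this]; simp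
      · rw [hnr_univ i h0, mul_one]
    rw [Finset.sum_congr rfl h2,
      sum_tsub' _ (fun i _ => hrow_le i) (fun i _ => measure_ne_top ρ _),
      sum_cells ρ hmeas hdisj hcover, hsrem, hsq]
  have hμ'_univ : μ' univ = srem := by
    have h1 : μ' univ = ∑ j, (μ (cell j) - colq j) * (nm j univ) := by
      rw [hμ', Measure.finset_sum_apply]
      exact Finset.sum_congr rfl fun j _ => by rw [Measure.smul_apply, smul_eq_mul]
    rw [h1]
    have h2 : ∀ j ∈ Finset.univ, (μ (cell j) - colq j) * (nm j univ) =
        μ (cell j) - colq j := by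
      intro j _
      by_cases h0 : μ (cell j) = 0
      · have : colq j = 0 := le_antisymm (h0 ▸ hcol_le j) zero_le
        rw [h0, this]; simp
      · rw [hnm_univ j h0, mul_one]
    rw [Finset.sum_congr rfl h2,
      sum_tsub' _ (fun j _ => hcol_le j) (fun j _ => measure_ne_top μ _),
      sum_cells μ hmeas hdisj hcover, hsrem, hsq]
    congr 1
    exact Finset.sum_comm
  have hρ'F : IsFiniteMeasure ρ' := ⟨by rw [hρ'_univ]; exact lt_of_le_of_lt tsub_le_self (by simp)⟩
  have hμ'F : IsFiniteMeasure μ' := ⟨by rw [hμ'_univ]; exact lt_of_le_of_lt tsub_le_self (by simp)⟩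
  -- null sets
  have hnrK : ∀ i, nr i ((cell i ∩ K)ᶜ) = 0 :=
    fun i => nmz_null (hmeas i) measurableSet_closedBall hρ.2
  have hnmK : ∀ j, nm j ((cell j ∩ K)ᶜ) = 0 :=
    fun j => nmz_null (hmeas j) measurableSet_closedBall hμ.2
  have hnrK' : ∀ i, nr i Kᶜ = 0 := fun i =>
    measure_mono_null (compl_subset_compl.2 inter_subset_right) (hnrK i)
  have hnmK' : ∀ j, nm j Kᶜ = 0 := fun j =>
    measure_mono_null (compl_subset_compl.2 inter_subset_right) (hnmK j)
  have hρ'K : ρ' Kᶜ = 0 := by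
    rw [hρ', Measure.finset_sum_apply]
    exact Finset.sum_eq_zero fun i _ => by rw [Measure.smul_apply, hnrK' i, smul_zero]
  have hμ'K : μ' Kᶜ = 0 := by
    rw [hμ', Measure.finset_sum_apply]
    exact Finset.sum_eq_zero fun j _ => by rw [Measure.smul_apply, hnmK' j, smul_zero]
  -- marginals of A
  have hAfst : A.map Prod.fst = ∑ i, rowq i • nr i := by
    rw [hA, map_finset_sum _ _ measurable_fst]
    refine Finset.sum_congr rfl fun i _ => ?_
    rw [map_finset_sum _ _ measurable_fst]
    have h3 : ∀ j ∈ Finset.univ, (qq i j • pr i j).map Prod.fst =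
        (qq i j * nm j univ) • nr i := by
      intro j _
      haveI := hnmF j
      rw [Measure.map_smul, hpr]
      rw [Measure.map_fst_prod, smul_smul]
    rw [Finset.sum_congr rfl h3]
    have h4 : ∀ j ∈ Finset.univ, qq i j * nm j univ = qq i j := by
      intro j _
      by_cases h0 : μ (cell j) = 0
      · rw [hq_zero_col j h0 i, zero_mul]
      · rw [hnm_univ j h0, mul_one]
    rw [← Finset.sum_smul, Finset.sum_congr rfl h4, hrowq]
  have hAsnd : A.map Prod.snd = ∑ j, colq j • nm j := by
    rw [hA, map_finset_sum _ _ measurable_snd]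
    have h5 : ∀ i ∈ Finset.univ, (∑ j, qq i j • pr i j).map Prod.snd =
        ∑ j, (qq i j * nr i univ) • nm j := by
      intro i _
      rw [map_finset_sum _ _ measurable_snd]
      refine Finset.sum_congr rfl fun j _ => ?_
      haveI := hnmF j
      rw [Measure.map_smul, hpr, Measure.map_snd_prod, smul_smul]
    rw [Finset.sum_congr rfl h5, Finset.sum_comm]
    refine Finset.sum_congr rfl fun j _ => ?_
    have h6 : ∀ i ∈ Finset.univ, qq i j * nr i univ = qq i j := by
      intro i _
      by_cases h0 : ρ (cell i) = 0
      · rw [hq_zero_row i h0 j, zero_mul]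
      · rw [hnr_univ i h0, mul_one]
    rw [← Finset.sum_smul, Finset.sum_congr rfl h6, hcolq]
  -- the degenerate case
  have hcase0 : srem = 0 → (∀ i, rowq i = ρ (cell i)) ∧ (∀ j, colq j = μ (cell j)) ∧
      ρ' = 0 ∧ μ' = 0 := by
    intro h0
    have hρ'0 : ρ' = 0 := by rw [← Measure.measure_univ_eq_zero, hρ'_univ, h0]
    have hμ'0 : μ' = 0 := by rw [← Measure.measure_univ_eq_zero, hμ'_univ, h0]
    have hsum0 : ∑ i, (ρ (cell i) - rowq i) = 0 := by
      rw [sum_tsub' _ (fun i _ => hrow_le i) (fun i _ => measure_ne_top ρ _),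
        sum_cells ρ hmeas hdisj hcover, ← hsq, ← hsrem, h0]
    have hsum0' : ∑ j, (μ (cell j) - colq j) = 0 := by
      rw [sum_tsub' _ (fun j _ => hcol_le j) (fun j _ => measure_ne_top μ _),
        sum_cells μ hmeas hdisj hcover]
      have : ∑ j, colq j = sq := by rw [hsq]; exact (Finset.sum_comm).symm
      rw [this, ← hsrem, h0]
    refine ⟨fun i => ?_, fun j => ?_, hρ'0, hμ'0⟩
    · have := (Finset.sum_eq_zero_iff.1 hsum0) i (Finset.mem_univ i)
      exact le_antisymm (hrow_le i) (tsub_eq_zero_iff_le.1 this)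
    · have := (Finset.sum_eq_zero_iff.1 hsum0') j (Finset.mem_univ j)
      exact le_antisymm (hcol_le j) (tsub_eq_zero_iff_le.1 this)
  -- marginals of γ
  have hγfst : γ.map Prod.fst = ρ := by
    rw [hγ, Measure.map_add _ _ measurable_fst, hAfst]
    by_cases h0 : srem = 0
    · obtain ⟨heq, -, hρ'0, -⟩ := hcase0 h0
      rw [hB, hρ'0]
      have : ((0 : Measure (Euc d)).prod μ') = 0 := by
        haveI := hμ'F
        rw [← Measure.measure_univ_eq_zero, ← univ_prod_univ, Measure.prod_prod]
        simp
      rw [this, smul_zero, Measure.map_zero, add_zero]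
      have h7 : ∀ i ∈ Finset.univ, rowq i • nr i = ρ (cell i) • nr i :=
        fun i _ => by rw [heq i]
      rw [Finset.sum_congr rfl h7, sum_smul_nmz hmeas hdisj hcover]
    · haveI := hμ'F
      rw [hB, Measure.map_smul, Measure.map_fst_prod, hμ'_univ, smul_smul,
        ENNReal.inv_mul_cancel h0 hsrem_fin, one_smul, hρ']
      rw [← Finset.sum_add_distrib]
      have h8 : ∀ i ∈ Finset.univ,
          rowq i • nr i + (ρ (cell i) - rowq i) • nr i = ρ (cell i) • nr i := by
        intro i _
        rw [← add_smul, add_tsub_cancel_of_le (hrow_le i)]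
      rw [Finset.sum_congr rfl h8, sum_smul_nmz hmeas hdisj hcover]
  have hγsnd : γ.map Prod.snd = μ := by
    rw [hγ, Measure.map_add _ _ measurable_snd, hAsnd]
    by_cases h0 : srem = 0
    · obtain ⟨-, heq, hρ'0, -⟩ := hcase0 h0
      rw [hB, hρ'0]
      have : ((0 : Measure (Euc d)).prod μ') = 0 := by
        haveI := hμ'F
        rw [← Measure.measure_univ_eq_zero, ← univ_prod_univ, Measure.prod_prod]
        simp
      rw [this, smul_zero, Measure.map_zero, add_zero]
      have h7 : ∀ j ∈ Finset.univ, colq j • nm j = μ (cell j) • nm j :=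
        fun j _ => by rw [heq j]
      rw [Finset.sum_congr rfl h7, sum_smul_nmz hmeas hdisj hcover]
    · haveI := hμ'F
      rw [hB, Measure.map_smul, Measure.map_snd_prod, hρ'_univ, smul_smul,
        ENNReal.inv_mul_cancel h0 hsrem_fin, one_smul, hμ']
      rw [← Finset.sum_add_distrib]
      have h8 : ∀ j ∈ Finset.univ,
          colq j • nm j + (μ (cell j) - colq j) • nm j = μ (cell j) • nm j := by
        intro j _
        rw [← add_smul, add_tsub_cancel_of_le (hcol_le j)]
      rw [Finset.sum_congr rfl h8, sum_smul_nmz hmeas hdisj hcover]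
  have hcoupling : γ ∈ Couplings ρ μ := ⟨hγfst, hγsnd⟩
  -- cost bounds
  have hcellbound : ∀ i j, ∀ p : Euc d × Euc d, p ∈ (cell i ∩ K) ×ˢ (cell j ∩ K) →
      ‖p.1 - p.2‖ ^ 2 ≤ (‖c i - c j‖ + 2 * ε) ^ 2 := by
    intro i j p hp
    have h1 : ‖p.1 - c i‖ ≤ ε := hclose i p.1 hp.1
    have h2 : ‖p.2 - c j‖ ≤ ε := hclose j p.2 hp.2
    have h3 : ‖p.1 - p.2‖ ≤ ‖c i - c j‖ + 2 * ε := by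
      have he : p.1 - p.2 = (p.1 - c i) + (c i - c j) + (c j - p.2) := by abel
      rw [he]
      have h4 := norm_add₃_le (a := p.1 - c i) (b := c i - c j) (c := c j - p.2)
      have h5 : ‖c j - p.2‖ = ‖p.2 - c j‖ := norm_sub_rev _ _
      rw [h5] at h4
      linarith
    have hnn : (0:ℝ) ≤ ‖c i - c j‖ + 2 * ε := by positivity
    exact sq_le_sq' (by linarith [norm_nonneg (p.1 - p.2)]) h3
  have hpiece : ∀ i j,
      Integrable (fun p : Euc d × Euc d => ‖p.1 - p.2‖ ^ 2) (qq i j • pr i j) ∧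
      costI (qq i j • pr i j) ≤ (q i j : ℝ) * (‖c i - c j‖ + 2 * ε) ^ 2 := by
    intro i j
    haveI := hnrF i; haveI := hnmF j
    have hnull : (pr i j) (((cell i ∩ K) ×ˢ (cell j ∩ K))ᶜ) = 0 :=
      prod_null_compl _ _ (hnrK i) (hnmK j)
    have hae : ∀ᵐ p ∂(pr i j), ‖p.1 - p.2‖ ^ 2 ≤ (‖c i - c j‖ + 2 * ε) ^ 2 := by
      rw [ae_iff]
      refine measure_mono_null ?_ hnull
      intro p hp
      simp only [mem_setOf_eq, not_le] at hp
      intro hmem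
      exact absurd (hcellbound i j p hmem) (not_le.2 hp)
    have hbnn : (0:ℝ) ≤ (‖c i - c j‖ + 2 * ε) ^ 2 := by positivity
    obtain ⟨hint, hle⟩ := cost_bound (pr i j) hbnn hae
    have hmass : ((pr i j) univ).toReal ≤ 1 := by
      have hm : (pr i j) univ ≤ 1 := by
        rw [hpr, ← univ_prod_univ, Measure.prod_prod]
        exact mul_le_one' (nmz_univ_le (measure_ne_top ρ _)) (nmz_univ_le (measure_ne_top μ _))
      calc ((pr i j) univ).toReal ≤ (1:ℝ≥0∞).toReal := ENNReal.toReal_mono (by simp) hm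
      _ = 1 := by simp
    refine ⟨hint.smul_measure (hqq_fin i j), ?_⟩
    have hcostpr : costI (pr i j) ≤ (‖c i - c j‖ + 2 * ε) ^ 2 := by
      calc costI (pr i j) ≤ (‖c i - c j‖ + 2 * ε) ^ 2 * ((pr i j) univ).toReal := hle
      _ ≤ (‖c i - c j‖ + 2 * ε) ^ 2 * 1 := by
          exact mul_le_mul_of_nonneg_left hmass hbnn
      _ = (‖c i - c j‖ + 2 * ε) ^ 2 := mul_one _
    have : costI (qq i j • pr i j) = (q i j : ℝ) * costI (pr i j) := by
      rw [costI, integral_smul_measure, hqq_toReal, smul_eq_mul]; rfl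
    rw [this]
    exact mul_le_mul_of_nonneg_left hcostpr (hq0' i j)
  have hBpiece : Integrable (fun p : Euc d × Euc d => ‖p.1 - p.2‖ ^ 2) B ∧
      costI B ≤ (2 * R + 2 * ε) ^ 2 * (1 - ∑ i, ∑ j, (q i j : ℝ)) := by
    have hrest_nn : (0:ℝ) ≤ 1 - ∑ i, ∑ j, (q i j : ℝ) := by linarith
    have hcnn : (0:ℝ) ≤ (2 * R + 2 * ε) ^ 2 := by positivity
    by_cases h0 : srem = 0
    · have hρ'0 : ρ' = 0 := (hcase0 h0).2.2.1
      have hprod0 : (ρ'.prod μ') = 0 := by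
        haveI := hμ'F
        rw [hρ'0, ← Measure.measure_univ_eq_zero, ← univ_prod_univ, Measure.prod_prod]
        simp
      have hB0 : B = 0 := by rw [hB, hprod0, smul_zero]
      rw [hB0]
      constructor
      · exact integrable_zero_measure
      · rw [costI, integral_zero_measure]
        exact mul_nonneg hcnn hrest_nn
    · haveI := hρ'F; haveI := hμ'F
      have hsrem_toReal_ne : srem.toReal ≠ 0 :=
        ENNReal.toReal_ne_zero.2 ⟨h0, hsrem_fin⟩
      have hnull : (ρ'.prod μ') ((K ×ˢ K)ᶜ) = 0 := prod_null_compl _ _ hρ'K hμ'K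
      have hae : ∀ᵐ p ∂(ρ'.prod μ'), ‖p.1 - p.2‖ ^ 2 ≤ (2 * R) ^ 2 := by
        rw [ae_iff]
        refine measure_mono_null ?_ hnull
        intro p hp
        simp only [mem_setOf_eq, not_le] at hp
        intro hmem
        have := pow_le_pow_left₀ (norm_nonneg _) (norm_sub_le_of_memK hmem.1 hmem.2) 2
        exact absurd this (not_le.2 hp)
      obtain ⟨hint, hle⟩ := cost_bound (ρ'.prod μ') (by positivity) hae
      have hmass : ((ρ'.prod μ') univ) = srem * srem := by
        rw [← univ_prod_univ, Measure.prod_prod, hρ'_univ, hμ'_univ]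
      constructor
      · exact hint.smul_measure (ENNReal.inv_ne_top.2 h0)
      · have hc1 : costI B = (srem.toReal)⁻¹ * costI (ρ'.prod μ') := by
          rw [hB, costI, integral_smul_measure, ENNReal.toReal_inv, smul_eq_mul]; rfl
        have hsremR : srem.toReal = 1 - ∑ i, ∑ j, (q i j : ℝ) := by
          rw [hsrem, ENNReal.toReal_sub_of_le hsq_le (by simp), hsq_toReal]
          simp
        have hc2 : costI (ρ'.prod μ') ≤ (2 * R) ^ 2 * (srem.toReal * srem.toReal) := by
          calc costI (ρ'.prod μ') ≤ (2 * R) ^ 2 * ((ρ'.prod μ') univ).toReal := hle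
          _ = (2 * R) ^ 2 * (srem.toReal * srem.toReal) := by
              rw [hmass, ENNReal.toReal_mul]
        rw [hc1]
        have hsrem_nn : (0:ℝ) ≤ srem.toReal := ENNReal.toReal_nonneg
        calc (srem.toReal)⁻¹ * costI (ρ'.prod μ')
            ≤ (srem.toReal)⁻¹ * ((2 * R) ^ 2 * (srem.toReal * srem.toReal)) := by
              exact mul_le_mul_of_nonneg_left hc2 (by positivity)
        _ = (2 * R) ^ 2 * srem.toReal := by
              field_simp
        _ ≤ (2 * R + 2 * ε) ^ 2 * (1 - ∑ i, ∑ j, (q i j : ℝ)) := by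
              rw [hsremR]
              have h2R : (2 * R) ^ 2 ≤ (2 * R + 2 * ε) ^ 2 := by nlinarith
              rw [hsremR] at hsrem_nn
              exact mul_le_mul h2R le_rfl hsrem_nn hcnn
  -- put everything together
  have hintA : Integrable (fun p : Euc d × Euc d => ‖p.1 - p.2‖ ^ 2) A := by
    rw [hA]
    exact integrable_finset_sum_measure.2 fun i _ =>
      integrable_finset_sum_measure.2 fun j _ => (hpiece i j).1
  have hcostA : costI A ≤ ∑ i, ∑ j, (q i j : ℝ) * (‖c i - c j‖ + 2 * ε) ^ 2 := by
    rw [hA, costI, integral_finset_sum_measure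
      (fun i _ => integrable_finset_sum_measure.2 fun j _ => (hpiece i j).1)]
    refine Finset.sum_le_sum fun i _ => ?_
    rw [integral_finset_sum_measure (fun j _ => (hpiece i j).1)]
    exact Finset.sum_le_sum fun j _ => (hpiece i j).2
  calc mc ρ μ ≤ costI γ := mc_le_costI hcoupling
  _ = costI A + costI B := by
      rw [hγ, costI, integral_add_measure hintA hBpiece.1]; rfl
  _ ≤ val c R ε q := add_le_add hcostA hBpiece.2

end W2Aux

namespace W2Aux

set_option maxHeartbeats 2000000 in
/-- **Claim B**: there are feasible rational matrices whose value is close to the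
minimal cost. -/
lemma exists_feasible_val_le {d m : ℕ} {R ε : ℝ} (hR : 0 ≤ R) (hε : 0 < ε)
    {c : Fin m → Euc d} {cell : Fin m → Set (Euc d)}
    (hmeas : ∀ i, MeasurableSet (cell i)) (hdisj : Pairwise (Function.onFun Disjoint cell))
    (hcover : (⋃ i, cell i) = univ)
    (hclose : ∀ i, ∀ x ∈ cell i ∩ closedBall (0 : Euc d) R, ‖x - c i‖ ≤ ε)
    {ρ μ : Measure (Euc d)} (hρ : ProbOn (closedBall (0 : Euc d) R) ρ)
    (hμ : ProbOn (closedBall (0 : Euc d) R) μ)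
    {δ : ℝ} (hδ : 0 < δ) :
    ∃ q : Fin m → Fin m → ℚ, Feas (fun j => (μ (cell j)).toReal) q ∧ rowOK cell q ρ ∧
      val c R ε q ≤ mc ρ μ + (16 * R * ε + 16 * ε ^ 2) + δ := by
  haveI := hρ.1; haveI := hμ.1
  set K := closedBall (0 : Euc d) R with hKdef
  -- a near optimal coupling
  have hne : (costI '' Couplings ρ μ).Nonempty :=
    ⟨costI (ρ.prod μ), ρ.prod μ, prod_mem_couplings hρ.1 hμ.1, rfl⟩
  obtain ⟨x, ⟨γ, hγ, rfl⟩, hx⟩ := exists_lt_of_csInf_lt hne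
    (show mc ρ μ < mc ρ μ + δ / 2 by linarith)
  haveI := coupling_isProb hρ.1 hγ
  obtain ⟨hint, -⟩ := coupling_cost_le hR hρ hμ hγ
  have hg0nn : ∀ i j : Fin m, (0:ℝ) ≤ (‖c i - c j‖ + 2 * ε) ^ 2 := fun i j => by positivity
  set π : Fin m → Fin m → ℝ := fun i j => (γ (cell i ×ˢ cell j)).toReal with hπ
  have hπnn : ∀ i j, 0 ≤ π i j := fun i j => ENNReal.toReal_nonneg
  -- row sums of π
  have hrowsum : ∀ i, ∑ j, π i j = (ρ (cell i)).toReal := by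
    intro i
    have h1 : (cell i ×ˢ (univ : Set (Euc d))) = ⋃ j, cell i ×ˢ cell j := by
      ext p
      simp only [mem_prod, mem_univ, and_true, mem_iUnion]
      constructor
      · intro hp
        have : p.2 ∈ ⋃ j, cell j := by rw [hcover]; trivial
        obtain ⟨j, hj⟩ := mem_iUnion.1 this
        exact ⟨j, hp, hj⟩
      · rintro ⟨j, hj⟩; exact hj.1
    have h2 : γ (cell i ×ˢ (univ : Set (Euc d))) = ∑ j, γ (cell i ×ˢ cell j) := by
      rw [h1, measure_iUnion ?_ (fun j => (hmeas i).prod (hmeas j)), tsum_fintype]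
      intro j j' hjj'
      exact Disjoint.set_prod_right (hdisj hjj') _ _
    have h3 : γ (cell i ×ˢ (univ : Set (Euc d))) = ρ (cell i) := by
      have hpre : (Prod.fst ⁻¹' cell i : Set (Euc d × Euc d)) = cell i ×ˢ univ := by
        ext p; simp [mem_prod]
      rw [← hpre, ← Measure.map_apply measurable_fst (hmeas i), hγ.1]
    have h4 : ∑ j, (γ (cell i ×ˢ cell j)).toReal = (∑ j, γ (cell i ×ˢ cell j)).toReal :=
      (ENNReal.toReal_sum fun j _ => measure_ne_top γ _).symm
    calc ∑ j, π i j = (∑ j, γ (cell i ×ˢ cell j)).toReal := h4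
    _ = (ρ (cell i)).toReal := by rw [← h2, h3]
  have hcolsum : ∀ j, ∑ i, π i j = (μ (cell j)).toReal := by
    intro j
    have h1 : ((univ : Set (Euc d)) ×ˢ cell j) = ⋃ i, cell i ×ˢ cell j := by
      ext p
      simp only [mem_prod, mem_univ, true_and, mem_iUnion]
      constructor
      · intro hp
        have : p.1 ∈ ⋃ i, cell i := by rw [hcover]; trivial
        obtain ⟨i, hi⟩ := mem_iUnion.1 this
        exact ⟨i, hi, hp⟩
      · rintro ⟨i, hi⟩; exact hi.2
    have h2 : γ ((univ : Set (Euc d)) ×ˢ cell j) = ∑ i, γ (cell i ×ˢ cell j) := by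
      rw [h1, measure_iUnion ?_ (fun i => (hmeas i).prod (hmeas j)), tsum_fintype]
      intro i i' hii'
      exact Disjoint.set_prod_left (hdisj hii') _ _
    have h3 : γ ((univ : Set (Euc d)) ×ˢ cell j) = μ (cell j) := by
      have hpre : (Prod.snd ⁻¹' cell j : Set (Euc d × Euc d)) = univ ×ˢ cell j := by
        ext p; simp [mem_prod]
      rw [← hpre, ← Measure.map_apply measurable_snd (hmeas j), hγ.2]
    have h4 : ∑ i, (γ (cell i ×ˢ cell j)).toReal = (∑ i, γ (cell i ×ˢ cell j)).toReal :=
      (ENNReal.toReal_sum fun i _ => measure_ne_top γ _).symm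
    calc ∑ i, π i j = (∑ i, γ (cell i ×ˢ cell j)).toReal := h4
    _ = (μ (cell j)).toReal := by rw [← h2, h3]
  have htotπ : ∑ i, ∑ j, π i j = 1 := by
    have h5 : ∑ i, ∑ j, π i j = ∑ i, (ρ (cell i)).toReal :=
      Finset.sum_congr rfl fun i _ => hrowsum i
    rw [h5, ← ENNReal.toReal_sum (fun i _ => measure_ne_top ρ _),
      sum_cells ρ hmeas hdisj hcover]
    simp
  -- cost lower bound
  have hEnn : (0:ℝ) ≤ 16 * R * ε + 16 * ε ^ 2 := by positivity
  have hcost_split : costI γ = ∑ i, ∑ j, ∫ z in cell i ×ˢ cell j,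
      ‖z.1 - z.2‖ ^ 2 ∂γ := by
    have hU : (⋃ p ∈ (Finset.univ : Finset (Fin m × Fin m)), cell p.1 ×ˢ cell p.2) =
        univ := by
      rw [eq_univ_iff_forall]
      intro z
      have h6 : z.1 ∈ ⋃ i, cell i := by rw [hcover]; trivial
      have h7 : z.2 ∈ ⋃ i, cell i := by rw [hcover]; trivial
      obtain ⟨i, hi⟩ := mem_iUnion.1 h6
      obtain ⟨j, hj⟩ := mem_iUnion.1 h7
      simp only [mem_iUnion]
      exact ⟨(i, j), Finset.mem_univ _, hi, hj⟩
    have h8 := integral_biUnion_finset (μ := γ)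
      (f := fun z : Euc d × Euc d => ‖z.1 - z.2‖ ^ 2)
      (Finset.univ : Finset (Fin m × Fin m))
      (s := fun p => cell p.1 ×ˢ cell p.2)
      (fun p _ => (hmeas p.1).prod (hmeas p.2))
      ?_ (fun p _ => hint.integrableOn)
    · rw [costI, ← setIntegral_univ, ← hU, h8]
      exact Fintype.sum_prod_type' (f := fun i j => ∫ z in cell i ×ˢ cell j, ‖z.1 - z.2‖ ^ 2 ∂γ)
    · intro p _ p' _ hpp'
      by_cases h9 : p.1 = p'.1
      · have h10 : p.2 ≠ p'.2 := fun h11 => hpp' (Prod.ext h9 h11)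
        exact Disjoint.set_prod_right (hdisj h10) _ _
      · exact Disjoint.set_prod_left (hdisj h9) _ _
  have hpiece_lb : ∀ i j, π i j * (‖c i - c j‖ + 2 * ε) ^ 2 ≤
      (∫ z in cell i ×ˢ cell j, ‖z.1 - z.2‖ ^ 2 ∂γ) +
        (16 * R * ε + 16 * ε ^ 2) * π i j := by
    intro i j
    have hmemae : ∀ᵐ z ∂(γ.restrict (cell i ×ˢ cell j)),
        z ∈ cell i ×ˢ cell j := ae_restrict_mem ((hmeas i).prod (hmeas j))
    have hKae : ∀ᵐ z ∂(γ.restrict (cell i ×ˢ cell j)), z.1 ∈ K ∧ z.2 ∈ K :=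
      ae_restrict_of_ae (coupling_ae_memK hγ hρ.2 hμ.2)
    have hlb : ∀ᵐ z ∂(γ.restrict (cell i ×ˢ cell j)),
        (‖c i - c j‖ + 2 * ε) ^ 2 - (16 * R * ε + 16 * ε ^ 2) ≤ ‖z.1 - z.2‖ ^ 2 := by
      filter_upwards [hmemae, hKae] with z hz hzK
      have h1 : ‖z.1 - c i‖ ≤ ε := hclose i z.1 ⟨hz.1, hzK.1⟩
      have h2 : ‖z.2 - c j‖ ≤ ε := hclose j z.2 ⟨hz.2, hzK.2⟩
      have h3 : ‖z.1 - z.2‖ ≤ 2 * R := norm_sub_le_of_memK hzK.1 hzK.2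
      have h4 : ‖c i - c j‖ ≤ ‖z.1 - z.2‖ + 2 * ε := by
        have he : c i - c j = (c i - z.1) + (z.1 - z.2) + (z.2 - c j) := by abel
        rw [he]
        have h5 := norm_add₃_le (a := c i - z.1) (b := z.1 - z.2) (c := z.2 - c j)
        have h6 : ‖c i - z.1‖ = ‖z.1 - c i‖ := norm_sub_rev _ _
        rw [h6] at h5
        linarith
      have h7 : (0:ℝ) ≤ ‖z.1 - z.2‖ := norm_nonneg _
      have h8 : (0:ℝ) ≤ ‖c i - c j‖ := norm_nonneg _
      have h9 : ‖c i - c j‖ + 2 * ε ≤ ‖z.1 - z.2‖ + 4 * ε := by linarith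
      have h10 : (‖c i - c j‖ + 2 * ε) ^ 2 ≤ (‖z.1 - z.2‖ + 4 * ε) ^ 2 :=
        pow_le_pow_left₀ (by positivity) h9 2
      have h11 : (‖z.1 - z.2‖ + 4 * ε) ^ 2 =
          ‖z.1 - z.2‖ ^ 2 + 8 * ε * ‖z.1 - z.2‖ + 16 * ε ^ 2 := by ring
      have h12 : 8 * ε * ‖z.1 - z.2‖ ≤ 16 * R * ε := by nlinarith
      linarith
    have hconst : ∫ _z in cell i ×ˢ cell j,
        ((‖c i - c j‖ + 2 * ε) ^ 2 - (16 * R * ε + 16 * ε ^ 2)) ∂γ =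
        ((‖c i - c j‖ + 2 * ε) ^ 2 - (16 * R * ε + 16 * ε ^ 2)) * π i j := by
      rw [setIntegral_const]
      simp only [hπ, smul_eq_mul, measureReal_def]
      ring
    have hmono : ∫ _z in cell i ×ˢ cell j,
        ((‖c i - c j‖ + 2 * ε) ^ 2 - (16 * R * ε + 16 * ε ^ 2)) ∂γ ≤
        ∫ z in cell i ×ˢ cell j, ‖z.1 - z.2‖ ^ 2 ∂γ :=
      integral_mono_ae (integrable_const _) hint.integrableOn hlb
    rw [hconst] at hmono
    nlinarith [hmono, hπnn i j, hEnn]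
  have hkey : ∑ i, ∑ j, π i j * (‖c i - c j‖ + 2 * ε) ^ 2 ≤
      costI γ + (16 * R * ε + 16 * ε ^ 2) := by
    have h1 : ∑ i, ∑ j, π i j * (‖c i - c j‖ + 2 * ε) ^ 2 ≤
        ∑ i, ∑ j, ((∫ z in cell i ×ˢ cell j, ‖z.1 - z.2‖ ^ 2 ∂γ) +
          (16 * R * ε + 16 * ε ^ 2) * π i j) :=
      Finset.sum_le_sum fun i _ => Finset.sum_le_sum fun j _ => hpiece_lb i j
    have h2 : ∑ i, ∑ j, ((∫ z in cell i ×ˢ cell j, ‖z.1 - z.2‖ ^ 2 ∂γ) +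
        (16 * R * ε + 16 * ε ^ 2) * π i j) =
        (∑ i, ∑ j, ∫ z in cell i ×ˢ cell j, ‖z.1 - z.2‖ ^ 2 ∂γ) +
          (16 * R * ε + 16 * ε ^ 2) * ∑ i, ∑ j, π i j := by
      calc ∑ i, ∑ j, ((∫ z in cell i ×ˢ cell j, ‖z.1 - z.2‖ ^ 2 ∂γ) +
          (16 * R * ε + 16 * ε ^ 2) * π i j)
          = ∑ i, ((∑ j, ∫ z in cell i ×ˢ cell j, ‖z.1 - z.2‖ ^ 2 ∂γ) +
            (16 * R * ε + 16 * ε ^ 2) * ∑ j, π i j) :=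
          Finset.sum_congr rfl fun i _ => by
            rw [Finset.sum_add_distrib, Finset.mul_sum]
      _ = _ := by rw [Finset.sum_add_distrib, Finset.mul_sum]
    rw [h2, htotπ, mul_one, ← hcost_split] at h1
    exact h1
  -- rational approximation
  set M : ℝ := (m : ℝ) ^ 2 with hM
  have hMnn : (0:ℝ) ≤ M := by positivity
  have hGnn : (0:ℝ) ≤ (2 * R + 2 * ε) ^ 2 := by positivity
  set θ : ℝ := δ / (2 * (M + 1) * ((2 * R + 2 * ε) ^ 2 + 1)) with hθ
  have hθpos : 0 < θ := by rw [hθ]; positivity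
  have hratex : ∀ i j, ∃ s : ℚ, 0 ≤ s ∧ (s : ℝ) ≤ π i j ∧ π i j - (s:ℝ) ≤ θ := by
    intro i j
    by_cases hc : π i j ≤ θ
    · refine ⟨0, le_refl 0, by simpa using hπnn i j, by simpa using hc⟩
    · push_neg at hc
      obtain ⟨s, hs1, hs2⟩ := exists_rat_btwn (show π i j - θ < π i j by linarith)
      refine ⟨s, ?_, le_of_lt hs2, by linarith⟩
      have hs0 : (0:ℝ) < (s:ℝ) := lt_trans (by linarith) hs1
      exact_mod_cast hs0.le
  choose qf hq1 hq2 hq3 using hratex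
  refine ⟨qf, ⟨fun i j => hq1 i j, fun j => ?_, ?_⟩, fun i => ?_, ?_⟩
  · calc ∑ i, ((qf i j : ℝ)) ≤ ∑ i, π i j := Finset.sum_le_sum fun i _ => hq2 i j
    _ = (μ (cell j)).toReal := hcolsum j
  · calc ∑ i, ∑ j, ((qf i j : ℝ)) ≤ ∑ i, ∑ j, π i j :=
        Finset.sum_le_sum fun i _ => Finset.sum_le_sum fun j _ => hq2 i j
    _ = 1 := htotπ
  · calc ∑ j, ((qf i j : ℝ)) ≤ ∑ j, π i j := Finset.sum_le_sum fun j _ => hq2 i j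
    _ = (ρ (cell i)).toReal := hrowsum i
  · -- the value bound
    have hsumdiff : ∑ i, ∑ j, (π i j - (qf i j : ℝ)) ≤ M * θ := by
      calc ∑ i, ∑ j, (π i j - (qf i j : ℝ)) ≤ ∑ i, ∑ j, θ :=
          Finset.sum_le_sum fun i _ => Finset.sum_le_sum fun j _ => hq3 i j
      _ = M * θ := by
          simp only [Finset.sum_const, Finset.card_univ, Fintype.card_fin, nsmul_eq_mul, hM]
          ring
    have h1mq : 1 - ∑ i, ∑ j, ((qf i j : ℝ)) = ∑ i, ∑ j, (π i j - (qf i j : ℝ)) := by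
      have : ∑ i, ∑ j, (π i j - (qf i j : ℝ)) =
          (∑ i, ∑ j, π i j) - ∑ i, ∑ j, ((qf i j : ℝ)) := by
        rw [← Finset.sum_sub_distrib]
        exact Finset.sum_congr rfl fun i _ => by rw [← Finset.sum_sub_distrib]
      rw [this, htotπ]
    have hval1 : ∑ i, ∑ j, ((qf i j:ℝ)) * (‖c i - c j‖ + 2 * ε) ^ 2 ≤
        ∑ i, ∑ j, π i j * (‖c i - c j‖ + 2 * ε) ^ 2 :=
      Finset.sum_le_sum fun i _ => Finset.sum_le_sum fun j _ =>
        mul_le_mul_of_nonneg_right (hq2 i j) (hg0nn i j)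
    have hGMθ : (2 * R + 2 * ε) ^ 2 * (M * θ) ≤ δ / 2 := by
      have hpos : (0:ℝ) < 2 * (M + 1) * ((2 * R + 2 * ε) ^ 2 + 1) := by positivity
      have heq : (2 * R + 2 * ε) ^ 2 * (M * θ) =
          ((2 * R + 2 * ε) ^ 2 * M) * δ / (2 * (M + 1) * ((2 * R + 2 * ε) ^ 2 + 1)) := by
        rw [hθ]; ring
      rw [heq, div_le_div_iff₀ hpos (by norm_num : (0:ℝ) < 2)]
      nlinarith [mul_nonneg hGnn hMnn, hδ.le, mul_nonneg hδ.le hMnn, mul_nonneg hδ.le hGnn,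
        mul_nonneg (mul_nonneg hδ.le hGnn) hMnn]
    have hG1mq : (2 * R + 2 * ε) ^ 2 * (1 - ∑ i, ∑ j, ((qf i j : ℝ))) ≤ δ / 2 := by
      calc (2 * R + 2 * ε) ^ 2 * (1 - ∑ i, ∑ j, ((qf i j : ℝ)))
          ≤ (2 * R + 2 * ε) ^ 2 * (M * θ) := by
            rw [h1mq]
            exact mul_le_mul_of_nonneg_left hsumdiff hGnn
      _ ≤ δ / 2 := hGMθ
    show (∑ i, ∑ j, ((qf i j : ℝ)) * (‖c i - c j‖ + 2 * ε) ^ 2) +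
        (2 * R + 2 * ε) ^ 2 * (1 - ∑ i, ∑ j, ((qf i j : ℝ))) ≤
        mc ρ μ + (16 * R * ε + 16 * ε ^ 2) + δ
    calc (∑ i, ∑ j, ((qf i j : ℝ)) * (‖c i - c j‖ + 2 * ε) ^ 2) +
        (2 * R + 2 * ε) ^ 2 * (1 - ∑ i, ∑ j, ((qf i j : ℝ)))
        ≤ (costI γ + (16 * R * ε + 16 * ε ^ 2)) + δ / 2 :=
          add_le_add (le_trans hval1 hkey) hG1mq
    _ ≤ mc ρ μ + (16 * R * ε + 16 * ε ^ 2) + δ := by linarith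

end W2Aux

namespace W2Aux
open scoped Classical

lemma Gfun_between {d m : ℕ} {R ε : ℝ} (hR : 0 ≤ R) (hε : 0 < ε)
    {c : Fin m → Euc d} {cell : Fin m → Set (Euc d)}
    (hmeas : ∀ i, MeasurableSet (cell i)) (hdisj : Pairwise (Function.onFun Disjoint cell))
    (hcover : (⋃ i, cell i) = univ)
    (hclose : ∀ i, ∀ x ∈ cell i ∩ closedBall (0 : Euc d) R, ‖x - c i‖ ≤ ε)
    {ρ μ : Measure (Euc d)} (hρ : ProbOn (closedBall (0 : Euc d) R) ρ)
    (hμ : ProbOn (closedBall (0 : Euc d) R) μ) :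
    ENNReal.ofReal (mc ρ μ) ≤ Gfun R ε c cell μ ρ ∧
      Gfun R ε c cell μ ρ ≤ ENNReal.ofReal (mc ρ μ + (16 * R * ε + 16 * ε ^ 2)) := by
  constructor
  · refine le_iInf fun q => ?_
    split_ifs with h
    · exact ENNReal.ofReal_le_ofReal
        (mc_le_val hR hε hmeas hdisj hcover hclose hρ hμ h.1 h.2)
    · exact le_top
  · refine ENNReal.le_of_forall_pos_le_add fun η hη _ => ?_
    have hηR : (0:ℝ) < (η : ℝ) := by exact_mod_cast hη
    obtain ⟨q, hF, hrow, hval⟩ :=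
      exists_feasible_val_le hR hε hmeas hdisj hcover hclose hρ hμ hηR
    have hstep : Gfun R ε c cell μ ρ ≤ ENNReal.ofReal (val c R ε q) := by
      have h0 := iInf_le (fun q' : Fin m → Fin m → ℚ =>
        if Feas (fun j => (μ (cell j)).toReal) q' ∧ rowOK cell q' ρ then
          ENNReal.ofReal (val c R ε q') else ⊤) q
      rw [if_pos ⟨hF, hrow⟩] at h0
      exact h0
    calc Gfun R ε c cell μ ρ ≤ ENNReal.ofReal (val c R ε q) := hstep
    _ ≤ ENNReal.ofReal ((mc ρ μ + (16 * R * ε + 16 * ε ^ 2)) + (η:ℝ)) := by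
        exact ENNReal.ofReal_le_ofReal (by linarith)
    _ ≤ ENNReal.ofReal (mc ρ μ + (16 * R * ε + 16 * ε ^ 2)) + ENNReal.ofReal (η:ℝ) :=
        ENNReal.ofReal_add_le
    _ = ENNReal.ofReal (mc ρ μ + (16 * R * ε + 16 * ε ^ 2)) + (η : ℝ≥0∞) := by
        rw [ENNReal.ofReal_coe_nnreal]

lemma exists_measurable_mc {d : ℕ} {R : ℝ} (hR : 0 ≤ R)
    {μ : Measure (Euc d)} (hμ : ProbOn (closedBall (0 : Euc d) R) μ) :
    ∃ g : Measure (Euc d) → ℝ, Measurable g ∧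
      ∀ ρ, ProbOn (closedBall (0 : Euc d) R) ρ → g ρ = mc ρ μ := by
  have hpart : ∀ n : ℕ, ∃ G : Measure (Euc d) → ℝ≥0∞, Measurable G ∧
      ∀ ρ, ProbOn (closedBall (0 : Euc d) R) ρ →
        ENNReal.ofReal (mc ρ μ) ≤ G ρ ∧
        G ρ ≤ ENNReal.ofReal (mc ρ μ + (16 * R + 16) * (1 / (n + 1))) := by
    intro n
    have hε : (0:ℝ) < 1 / ((n:ℝ) + 1) := by positivity
    obtain ⟨m, c, cell, hmeas, hdisj, hcover, hcK, hclose⟩ := exists_partition hR hε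
    refine ⟨Gfun R (1/((n:ℝ)+1)) c cell μ, measurable_Gfun _ _ _ _ hmeas μ, fun ρ hρ => ?_⟩
    obtain ⟨h1, h2⟩ := Gfun_between hR hε hmeas hdisj hcover hclose hρ hμ
    refine ⟨h1, le_trans h2 (ENNReal.ofReal_le_ofReal ?_)⟩
    have hε1 : (1:ℝ)/((n:ℝ)+1) ≤ 1 := by
      rw [div_le_one (by positivity)]
      simp
    nlinarith [hε.le, hR]
  choose G hGmeas hG using hpart
  refine ⟨fun ρ => (⨅ n, G n ρ).toReal,
    (Measurable.iInf fun n => hGmeas n).ennreal_toReal, fun ρ hρ => ?_⟩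
  have hlow : ENNReal.ofReal (mc ρ μ) ≤ ⨅ n, G n ρ := le_iInf fun n => (hG n ρ hρ).1
  have hup : (⨅ n, G n ρ) ≤ ENNReal.ofReal (mc ρ μ) := by
    refine ENNReal.le_of_forall_pos_le_add fun η hη _ => ?_
    have hηR : (0:ℝ) < (η : ℝ) := by exact_mod_cast hη
    obtain ⟨n, hn⟩ := exists_nat_gt ((16 * R + 16) / (η : ℝ))
    have hb : (16 * R + 16) * (1 / ((n:ℝ) + 1)) ≤ (η : ℝ) := by
      rw [div_lt_iff₀ hηR] at hn
      have hn1 : (0:ℝ) < (n:ℝ) + 1 := by positivity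
      rw [mul_one_div, div_le_iff₀ hn1]
      nlinarith [hηR.le]
    calc (⨅ k, G k ρ) ≤ G n ρ := iInf_le _ n
    _ ≤ ENNReal.ofReal (mc ρ μ + (16 * R + 16) * (1 / ((n:ℝ) + 1))) := (hG n ρ hρ).2
    _ ≤ ENNReal.ofReal (mc ρ μ + (η : ℝ)) := ENNReal.ofReal_le_ofReal (by linarith)
    _ ≤ ENNReal.ofReal (mc ρ μ) + ENNReal.ofReal (η : ℝ) := ENNReal.ofReal_add_le
    _ = ENNReal.ofReal (mc ρ μ) + (η : ℝ≥0∞) := by rw [ENNReal.ofReal_coe_nnreal]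
  have heq : (⨅ n, G n ρ) = ENNReal.ofReal (mc ρ μ) := le_antisymm hup hlow
  show (⨅ n, G n ρ).toReal = mc ρ μ
  rw [heq, ENNReal.toReal_ofReal (mc_nonneg ρ μ)]

end W2Aux

/-- **Stability bound from strong convexity of the variance functional.**
If `μ_P` minimizes `F_P`, `μ_Q` minimizes `F_Q`, and `F_P` satisfies the
strong convexity estimate `α W₂⁶(μ_P, ν) ≤ C (F_P(ν) - F_P(μ_P))` at its
minimizer, then `α W₂⁶(μ_P, μ_Q) ≤ C ⟨½(W₂²(·,μ_Q) - W₂²(·,μ_P)), P - Q⟩`. -/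
theorem stability_from_strong_convexity
    (d : ℕ) (R : ℝ) (hR : 0 < R) (P Q : Measure (Measure (Euc d)))
    (hP : PProbOn (closedBall (0 : Euc d) R) P)
    (hQ : PProbOn (closedBall (0 : Euc d) R) Q)
    (μP μQ : Measure (Euc d))
    (hμP : IsBary (closedBall (0 : Euc d) R) P μP)
    (hμQ : IsBary (closedBall (0 : Euc d) R) Q μQ)
    (α C : ℝ) (hα : 0 < α) (hC : 0 < C)
    (hsc : ∀ ν : Measure (Euc d), ProbOn (closedBall (0 : Euc d) R) ν →
      α * W2 μP ν ^ 6 ≤ C * (Fvar P ν - Fvar P μP)) :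
    α * W2 μP μQ ^ 6 ≤
      C * ((∫ ρ, (1 / 2) * (W2 ρ μQ ^ 2 - W2 ρ μP ^ 2) ∂P) -
        ∫ ρ, (1 / 2) * (W2 ρ μQ ^ 2 - W2 ρ μP ^ 2) ∂Q) := by
  haveI := hP.1; haveI := hQ.1
  have haeP : ∀ᵐ ρ ∂P, ProbOn (closedBall (0 : Euc d) R) ρ := by
    rw [ae_iff]; exact hP.2
  have haeQ : ∀ᵐ ρ ∂Q, ProbOn (closedBall (0 : Euc d) R) ρ := by
    rw [ae_iff]; exact hQ.2
  have key : ∀ S : Measure (Measure (Euc d)), IsProbabilityMeasure S →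
      (∀ᵐ ρ ∂S, ProbOn (closedBall (0 : Euc d) R) ρ) →
      ∀ ν : Measure (Euc d), ProbOn (closedBall (0 : Euc d) R) ν →
      Integrable (fun ρ => W2 ρ ν ^ 2) S := by
    intro S hS hae ν hν
    haveI := hS
    obtain ⟨g, hgmeas, hg⟩ := W2Aux.exists_measurable_mc hR.le hν
    have haes : AEStronglyMeasurable (fun ρ => W2 ρ ν ^ 2) S := by
      refine ⟨g, hgmeas.stronglyMeasurable, ?_⟩
      filter_upwards [hae] with ρ hρ
      rw [W2Aux.W2_sq, hg ρ hρ]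
    refine Integrable.mono' (integrable_const ((2 * R) ^ 2)) haes ?_
    filter_upwards [hae] with ρ hρ
    rw [Real.norm_of_nonneg (by positivity), W2Aux.W2_sq]
    exact W2Aux.mc_le_4R2 hR.le hρ hν
  have hIQP : Integrable (fun ρ => W2 ρ μQ ^ 2) P := key P hP.1 haeP μQ hμQ.1
  have hIPP : Integrable (fun ρ => W2 ρ μP ^ 2) P := key P hP.1 haeP μP hμP.1
  have hIQQ : Integrable (fun ρ => W2 ρ μQ ^ 2) Q := key Q hQ.1 haeQ μQ hμQ.1
  have hIPQ : Integrable (fun ρ => W2 ρ μP ^ 2) Q := key Q hQ.1 haeQ μP hμP.1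
  have hsplitP : ∫ ρ, (1 / 2) * (W2 ρ μQ ^ 2 - W2 ρ μP ^ 2) ∂P =
      Fvar P μQ - Fvar P μP := by
    rw [integral_const_mul, integral_sub hIQP hIPP, Fvar, Fvar]
    ring
  have hsplitQ : ∫ ρ, (1 / 2) * (W2 ρ μQ ^ 2 - W2 ρ μP ^ 2) ∂Q =
      Fvar Q μQ - Fvar Q μP := by
    rw [integral_const_mul, integral_sub hIQQ hIPQ, Fvar, Fvar]
    ring
  have h1 : α * W2 μP μQ ^ 6 ≤ C * (Fvar P μQ - Fvar P μP) := hsc μQ hμQ.1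
  have h2 : Fvar Q μQ - Fvar Q μP ≤ 0 := sub_nonpos.2 (hμQ.2 μP hμP.1)
  have h3 : C * (Fvar Q μQ - Fvar Q μP) ≤ 0 :=
    mul_nonpos_of_nonneg_of_nonpos hC.le h2
  rw [hsplitP, hsplitQ]
  nlinarith [h1, h3]
end
end

section
/- Let ρ be a Borel probability measure on a compact set X ⊂ ℝ^d, let C_1, …, C_N be Borel sets with X ⊂ ⋃_{i=1}^N C_i and ρ(C_i) > 0 for each i, and let f ∈ L²(ρ). For each i set ρ_i = ρ(C_i)^{-1}·ρ|_{C_i} and m_i = ∫ f dρ_i. Then Var_ρ(f) ≤ (∑_{i=1}^N ρ(C_i)) · ∑_{i=1}^N ρ(C_i)·Var_{ρ_i}(f) + ½·∑_{i=1}^N ∑_{j=1}^N (m_i − m_j)²·ρ(C_i)·ρ(C_j). -/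
noncomputable section

open MeasureTheory Metric Set
open scoped ENNReal NNReal RealInnerProductSpace

/-- The variance of `g` under `μ`. -/
def mvar {α : Type*} [MeasurableSpace α] (μ : Measure α) (g : α → ℝ) : ℝ :=
  (∫ x, g x ^ 2 ∂μ) - (∫ x, g x ∂μ) ^ 2

lemma cs_aux {α : Type*} [MeasurableSpace α] (μ : Measure α) (u g : α → ℝ)
    (hu : 0 ≤ᵐ[μ] u) (h1 : Integrable u μ)
    (h2 : Integrable (fun x => u x * g x) μ)
    (h3 : Integrable (fun x => u x * g x ^ 2) μ) :
    (∫ x, u x * g x ∂μ) ^ 2 ≤ (∫ x, u x ∂μ) * ∫ x, u x * g x ^ 2 ∂μ := by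
  set A := ∫ x, u x ∂μ with hA
  set B := ∫ x, u x * g x ∂μ with hB
  set Q := ∫ x, u x * g x ^ 2 ∂μ with hQ
  have key : ∀ t : ℝ, 0 ≤ A * (t * t) + (-2 * B) * t + Q := by
    intro t
    have h0 : 0 ≤ ∫ x, u x * (g x - t) ^ 2 ∂μ :=
      integral_nonneg_of_ae (hu.mono fun x hx => mul_nonneg hx (sq_nonneg _))
    have heq : (fun x => u x * (g x - t) ^ 2)
        = fun x => (u x * g x ^ 2 - (2 * t) * (u x * g x)) + (t * t) * u x := by
      funext x; ring
    have i1 : Integrable (fun x => u x * g x ^ 2 - (2 * t) * (u x * g x)) μ :=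
      h3.sub (h2.const_mul _)
    have i2 : Integrable (fun x => (t * t) * u x) μ := h1.const_mul _
    rw [heq, integral_add i1 i2,
      integral_sub h3 (h2.const_mul _), integral_const_mul, integral_const_mul] at h0
    rw [hA, hB, hQ]; ring_nf; ring_nf at h0; linarith
  have hd := discrim_le_zero key
  rw [discrim] at hd
  nlinarith [hd]

/-- **Variance decomposition over a covering by cells.**
For a probability measure `ρ` on a compact set `X ⊆ ⋃ C_i` with `ρ(C_i) > 0`
and `f ∈ L²(ρ)`, writing `ρ_i` for the normalized restriction of `ρ` to `C_i`
and `m_i = ∫ f dρ_i`: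
`Var_ρ(f) ≤ (∑ ρ(C_i)) ∑ ρ(C_i) Var_{ρ_i}(f) + ½ ∑_{i,j} (m_i - m_j)² ρ(C_i) ρ(C_j)`. -/
theorem variance_decomposition_cells
    (d : ℕ) (X : Set (Euc d)) (hX : IsCompact X)
    (ρ : Measure (Euc d)) (hρ : IsProbabilityMeasure ρ) (hρX : ρ Xᶜ = 0)
    (N : ℕ) (C : Fin N → Set (Euc d)) (hCm : ∀ i, MeasurableSet (C i))
    (hcover : X ⊆ ⋃ i, C i) (hpos : ∀ i, 0 < ρ (C i))
    (f : Euc d → ℝ) (hf : MemLp f 2 ρ) :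
    mvar ρ f ≤
      (∑ i, (ρ (C i)).toReal) *
          ∑ i, (ρ (C i)).toReal * mvar ((ρ (C i))⁻¹ • ρ.restrict (C i)) f +
        (1 / 2) *
          ∑ i, ∑ j,
            ((∫ x, f x ∂((ρ (C i))⁻¹ • ρ.restrict (C i))) -
                ∫ x, f x ∂((ρ (C j))⁻¹ • ρ.restrict (C j))) ^ 2 *
              (ρ (C i)).toReal * (ρ (C j)).toReal := by
  classical
  -- notation
  set a : Fin N → ℝ := fun i => (ρ (C i)).toReal with ha
  have hapos : ∀ i, 0 < a i := fun i =>
    ENNReal.toReal_pos (hpos i).ne' (measure_ne_top ρ _)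
  have hane : ∀ i, a i ≠ 0 := fun i => (hapos i).ne'
  -- integrability
  have hfi : Integrable f ρ := hf.integrable one_le_two
  have hf2i : Integrable (fun x => f x ^ 2) ρ := hf.integrable_sq
  set m := ∫ x, f x ∂ρ with hm
  set g : Euc d → ℝ := fun x => f x - m with hg
  have hgi : Integrable g ρ := hfi.sub (integrable_const m)
  have hg2i : Integrable (fun x => g x ^ 2) ρ := (hf.sub (memLp_const m)).integrable_sq
  -- the weight function w
  set w : Euc d → ℝ := fun x => ∑ i, (C i).indicator (fun _ => (1:ℝ)) x with hwdef
  have hind : ∀ (h : Euc d → ℝ) (x : Euc d),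
      (∑ i, (C i).indicator h x) = w x * h x := by
    intro h x
    rw [hwdef, Finset.sum_mul]
    refine Finset.sum_congr rfl fun i _ => ?_
    by_cases hx : x ∈ C i <;> simp [Set.indicator_of_mem, Set.indicator_of_notMem, hx]
  have hsum : ∀ (h : Euc d → ℝ), Integrable h ρ →
      (∑ i, ∫ x in C i, h x ∂ρ) = ∫ x, w x * h x ∂ρ := by
    intro h hh
    have h1 : ∀ i, ∫ x in C i, h x ∂ρ = ∫ x, (C i).indicator h x ∂ρ := fun i =>
      (integral_indicator (hCm i)).symm
    simp_rw [h1]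
    rw [← integral_finset_sum _ (fun i _ => hh.indicator (hCm i))]
    exact integral_congr_ae (Filter.Eventually.of_forall fun x => hind h x)
  have hwint : ∀ (h : Euc d → ℝ), Integrable h ρ →
      Integrable (fun x => w x * h x) ρ := by
    intro h hh
    exact (integrable_finset_sum _ (fun i _ => hh.indicator (hCm i))).congr
      (Filter.Eventually.of_forall fun x => hind h x)
  -- w ≥ 1 a.e.
  have hw_ae : ∀ᵐ x ∂ρ, 1 ≤ w x := by
    have hA : ρ (⋃ i, C i)ᶜ = 0 :=
      measure_mono_null (Set.compl_subset_compl.2 hcover) hρX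
    have hmem : ∀ᵐ x ∂ρ, x ∈ ⋃ i, C i := by
      rw [ae_iff]
      exact hA
    refine hmem.mono fun x hx => ?_
    obtain ⟨i, hi⟩ := Set.mem_iUnion.1 hx
    have h1 : (C i).indicator (fun _ => (1:ℝ)) x
        ≤ ∑ j, (C j).indicator (fun _ => (1:ℝ)) x :=
      Finset.single_le_sum
        (fun j _ => Set.indicator_nonneg (fun _ _ => zero_le_one) x)
        (Finset.mem_univ i)
    simpa [hwdef, Set.indicator_of_mem hi] using h1
  -- quantities
  set Mi : Fin N → ℝ := fun i => ∫ x in C i, f x ∂ρ with hMi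
  set Qi : Fin N → ℝ := fun i => ∫ x in C i, f x ^ 2 ∂ρ with hQi
  set S := ∑ i, a i with hS
  set b := ∑ i, Mi i with hb
  set Qs := ∑ i, Qi i with hQs
  set Bg := ∑ i, ∫ x in C i, g x ∂ρ with hBg
  set Qg := ∑ i, ∫ x in C i, g x ^ 2 ∂ρ with hQg
  set I2 := ∫ x, g x ^ 2 ∂ρ with hI2
  -- relation between (Bg, Qg) and (b, Qs)
  have hMg : ∀ i, (∫ x in C i, g x ∂ρ) = Mi i - m * a i := by
    intro i
    rw [hg]
    rw [integral_sub hfi.restrict (integrable_const m), setIntegral_const]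
    simp [ha, hMi, hQi, smul_eq_mul, mul_comm, Measure.real]
  have hQgrel : ∀ i, (∫ x in C i, g x ^ 2 ∂ρ) = Qi i - 2 * m * Mi i + m ^ 2 * a i := by
    intro i
    have heq : (fun x => g x ^ 2) = fun x => (f x ^ 2 - (2 * m) * f x) + m ^ 2 := by
      funext x; rw [hg]; ring
    have i1 : Integrable (fun x => f x ^ 2 - (2 * m) * f x) (ρ.restrict (C i)) :=
      hf2i.restrict.sub (hfi.restrict.const_mul _)
    have i2 : Integrable (fun _ : Euc d => m ^ 2) (ρ.restrict (C i)) := integrable_const _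
    rw [heq, integral_add i1 i2,
      integral_sub hf2i.restrict (hfi.restrict.const_mul _), integral_const_mul,
      setIntegral_const]
    simp [ha, hMi, hQi, smul_eq_mul, mul_comm, Measure.real]
  have hBgrel : Bg = b - m * S := by
    rw [hBg, hb, hS]
    simp_rw [hMg]
    rw [Finset.sum_sub_distrib, Finset.mul_sum]
  have hQgrel' : Qg = Qs - 2 * m * b + m ^ 2 * S := by
    rw [hQg, hQs, hb, hS]
    simp_rw [hQgrel]
    rw [Finset.sum_add_distrib, Finset.sum_sub_distrib, Finset.mul_sum, Finset.mul_sum]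
  -- S = ∫ w
  have hSint : S = ∫ x, w x * 1 ∂ρ := by
    rw [hS, ← hsum (fun _ => 1) (integrable_const 1)]
    refine Finset.sum_congr rfl fun i _ => ?_
    rw [setIntegral_const]; simp [ha, Measure.real]
  have hwi : Integrable w ρ := ((hwint (fun _ => 1) (integrable_const 1)).congr
    (Filter.Eventually.of_forall fun x => by simp))
  have hSint' : S = ∫ x, w x ∂ρ := by
    rw [hSint]; exact integral_congr_ae (Filter.Eventually.of_forall fun x => by simp)
  -- S ≥ 1
  have hS1 : 1 ≤ S := by
    rw [hSint']
    have : (1:ℝ) = ∫ _, (1:ℝ) ∂ρ := by simp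
    rw [this]
    exact integral_mono_ae (integrable_const 1) hwi hw_ae
  -- Qg ≥ I2
  have hQgI2 : I2 ≤ Qg := by
    rw [hQg, hsum _ hg2i, hI2]
    refine integral_mono_ae hg2i (hwint _ hg2i) ?_
    exact hw_ae.mono fun x hx => le_mul_of_one_le_left (sq_nonneg _) hx
  have hI2nonneg : 0 ≤ I2 := integral_nonneg fun x => sq_nonneg _
  -- ∫ g = 0
  have hgzero : ∫ x, g x ∂ρ = 0 := by
    rw [hg]
    rw [integral_sub hfi (integrable_const m)]
    simp [hm]
  -- Cauchy-Schwarz with u = w - 1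
  have hCS : Bg ^ 2 ≤ (S - 1) * (Qg - I2) := by
    have hu : (0:Euc d → ℝ) ≤ᵐ[ρ] fun x => w x - 1 :=
      hw_ae.mono fun x hx => by simpa using hx
    have h1 : Integrable (fun x => w x - 1) ρ := hwi.sub (integrable_const 1)
    have h2 : Integrable (fun x => (w x - 1) * g x) ρ :=
      ((hwint g hgi).sub hgi).congr
        (Filter.Eventually.of_forall fun x => by simp only [Pi.sub_apply]; ring)
    have h3 : Integrable (fun x => (w x - 1) * g x ^ 2) ρ :=
      ((hwint _ hg2i).sub hg2i).congr
        (Filter.Eventually.of_forall fun x => by simp only [Pi.sub_apply]; ring)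
    have key := cs_aux ρ (fun x => w x - 1) g hu h1 h2 h3
    have e1 : ∫ x, (w x - 1) * g x ∂ρ = Bg := by
      rw [hBg, hsum g hgi]
      have : (fun x => (w x - 1) * g x) = fun x => w x * g x - g x := by
        funext x; ring
      rw [this, integral_sub (hwint g hgi) hgi, hgzero, sub_zero]
    have e2 : ∫ x, (w x - 1) ∂ρ = S - 1 := by
      rw [integral_sub hwi (integrable_const 1), ← hSint']
      simp
    have e3 : ∫ x, (w x - 1) * g x ^ 2 ∂ρ = Qg - I2 := by
      rw [hQg, hsum _ hg2i, hI2]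
      have : (fun x => (w x - 1) * g x ^ 2) = fun x => w x * g x ^ 2 - g x ^ 2 := by
        funext x; ring
      rw [this, integral_sub (hwint _ hg2i) hg2i]
    rw [e1, e2, e3] at key
    exact key
  -- main analytic inequality
  have hmain : I2 ≤ S * Qg - Bg ^ 2 := by
    nlinarith [mul_nonneg (by linarith : (0:ℝ) ≤ S - 1) hI2nonneg, hCS, hQgI2, hS1]
  -- mvar ρ f = I2
  have hmvar : mvar ρ f = I2 := by
    have heq : (fun x => g x ^ 2) = fun x => (f x ^ 2 - (2 * m) * f x) + m ^ 2 := by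
      funext x; rw [hg]; ring
    have i1 : Integrable (fun x => f x ^ 2 - (2 * m) * f x) ρ :=
      hf2i.sub (hfi.const_mul _)
    have i2 : Integrable (fun _ : Euc d => m ^ 2) ρ := integrable_const _
    rw [mvar, hI2, heq, integral_add i1 i2,
      integral_sub hf2i (hfi.const_mul _), integral_const_mul, integral_const]
    simp only [Measure.real, measure_univ, ENNReal.toReal_one, smul_eq_mul, one_mul, ← hm]
    ring
  -- rewriting the RHS integrals
  have hmean : ∀ i, (∫ x, f x ∂((ρ (C i))⁻¹ • ρ.restrict (C i))) = Mi i / a i := by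
    intro i
    rw [integral_smul_measure, ENNReal.toReal_inv, smul_eq_mul, ← div_eq_inv_mul]
  have hmvari : ∀ i, mvar ((ρ (C i))⁻¹ • ρ.restrict (C i)) f
      = Qi i / a i - (Mi i / a i) ^ 2 := by
    intro i
    rw [mvar, hmean i, integral_smul_measure, ENNReal.toReal_inv, smul_eq_mul,
      ← div_eq_inv_mul]
  -- algebraic identity for the RHS
  have hsingle : (∑ i, a i * mvar ((ρ (C i))⁻¹ • ρ.restrict (C i)) f)
      = Qs - ∑ i, Mi i ^ 2 / a i := by
    rw [hQs, ← Finset.sum_sub_distrib]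
    refine Finset.sum_congr rfl fun i _ => ?_
    rw [hmvari i]
    field_simp [hane i]
  have hdouble : (∑ i, ∑ j,
        ((∫ x, f x ∂((ρ (C i))⁻¹ • ρ.restrict (C i))) -
            ∫ x, f x ∂((ρ (C j))⁻¹ • ρ.restrict (C j))) ^ 2 * a i * a j)
      = 2 * (S * ∑ i, Mi i ^ 2 / a i) - 2 * b ^ 2 := by
    have hterm : ∀ i j, ((∫ x, f x ∂((ρ (C i))⁻¹ • ρ.restrict (C i))) -
            ∫ x, f x ∂((ρ (C j))⁻¹ • ρ.restrict (C j))) ^ 2 * a i * a j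
        = (Mi i ^ 2 / a i) * a j + a i * (Mi j ^ 2 / a j) - 2 * (Mi i * Mi j) := by
      intro i j
      rw [hmean i, hmean j]
      field_simp [hane i, hane j]
      ring
    simp_rw [hterm]
    simp only [Finset.sum_sub_distrib, Finset.sum_add_distrib, ← Finset.sum_mul,
      ← Finset.mul_sum, ← hS, ← hb]
    ring
  -- conclude
  rw [hmvar]
  have hgoal : (∑ i, a i) *
          (∑ i, a i * mvar ((ρ (C i))⁻¹ • ρ.restrict (C i)) f) +
        (1 / 2) * (∑ i, ∑ j,
            ((∫ x, f x ∂((ρ (C i))⁻¹ • ρ.restrict (C i))) -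
                ∫ x, f x ∂((ρ (C j))⁻¹ • ρ.restrict (C j))) ^ 2 * a i * a j)
      = S * Qg - Bg ^ 2 := by
    rw [hsingle, hdouble, ← hS, hBgrel, hQgrel']
    ring
  calc I2 ≤ S * Qg - Bg ^ 2 := hmain
    _ = _ := hgoal.symm
end
end
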